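/- Fix k ≥ 1. The set of positive integers n such that F_{2k} appears in both the Zeckendorf decomposition and the Chung-Graham decomposition of n equals { mF_{2k} + ⌊(m−1)φ⌋ F_{2k+1} + j : m ∈ ℕ, m ≥ 1, 0 ≤ j ≤ F_{2k−1} − 1 }, where φ = (1+√5)/2. -/

import Mathlib

/-- The finite golden strings: `gs 1 = [B]`, `gs 2 = [B, A]`, `gs n = gs (n-1) ++ gs (n-2)`.
Here `true` denotes the letter B and `false` denotes the letter A. -/
def gs : ℕ → List Bool
  | 0 => []
  | 1 => [true]
  | 2 => [true, false]
  | (n+3) => gs (n+2) ++ gs (n+1)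

/-- The `i`-th letter (1-indexed) of the infinite golden string `S`;
`true` = B, `false` = A.  Since `gs n` is a prefix of `gs (n+1)` and
`(gs (i+1)).length = F (i+2) ≥ i`, this is well-defined. -/
def goldenLetter (i : ℕ) : Bool := (gs (i+1)).getD (i-1) true

/-- `s` is the (index set of the) Zeckendorf decomposition of `n`:
a set of indices `≥ 2`, no two adjacent, with `n = ∑_{i ∈ s} F i`. -/
def IsZeck (n : ℕ) (s : Finset ℕ) : Prop :=
  (∀ i ∈ s, 2 ≤ i) ∧ (∀ i ∈ s, i + 1 ∉ s) ∧ n = ∑ i ∈ s, Nat.fib i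

/-- `c` is the coefficient function of the Chung–Graham decomposition of `n`:
`n = ∑_{i ≥ 1} c i * F (2i)` with `c i ∈ {0,1,2}` and a coefficient `0`
strictly between any two coefficients equal to `2`. -/
def IsCG (n : ℕ) (c : ℕ →₀ ℕ) : Prop :=
  (∀ i, c i ≤ 2) ∧ c 0 = 0 ∧
  (∀ i₁ i₂, i₁ < i₂ → c i₁ = 2 → c i₂ = 2 → ∃ j, i₁ < j ∧ j < i₂ ∧ c j = 0) ∧
  n = c.sum (fun i a => a * Nat.fib (2 * i))

/-- `n` has `F (2k)` as the smallest summand of its Zeckendorf decomposition. -/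
def ZeckMin (k n : ℕ) : Prop :=
  ∃ s : Finset ℕ, IsZeck n s ∧ 2 * k ∈ s ∧ ∀ i ∈ s, 2 * k ≤ i

/-- `n` has `F (2k)` or `2 F (2k)` as the smallest summand of its
Chung–Graham decomposition. -/
def CGMin (k n : ℕ) : Prop :=
  ∃ c : ℕ →₀ ℕ, IsCG n c ∧ 1 ≤ c k ∧ ∀ i < k, c i = 0


open Nat Finset

lemma fib_lt_fib' {m n : ℕ} (hm : 2 ≤ m) (h : m < n) : Nat.fib m < Nat.fib n :=
  lt_of_lt_of_le (Nat.fib_lt_fib_succ hm) (Nat.fib_mono h)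

lemma lt_fib_add_two : ∀ n : ℕ, n < Nat.fib (n + 2) := by
  intro n
  induction n using Nat.strong_induction_on with
  | _ n ih =>
    match n with
    | 0 => decide
    | 1 => decide
    | (m+2) =>
      have h1 := ih m (by omega)
      have h2 := ih (m+1) (by omega)
      have h3 : Nat.fib (m+4) = Nat.fib (m+2) + Nat.fib (m+3) := Nat.fib_add_two
      have e1 : m+1+2 = m+3 := rfl
      have e2 : m+2+2 = m+4 := rfl
      rw [e1] at h2
      rw [e2]
      omega

lemma sum_even_tel : ∀ (t p : ℕ), 1 ≤ p → p ≤ t + 1 →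
    (∑ s ∈ Icc p t, Nat.fib (2*s)) + Nat.fib (2*p - 1) = Nat.fib (2*t + 1) := by
  intro t
  induction t with
  | zero =>
    intro p h1 h2
    have : p = 1 := by omega
    subst this
    simp
  | succ t ih =>
    intro p h1 h2
    rcases Nat.lt_or_ge t.succ p with h | h
    · have : p = t + 2 := by omega
      subst this
      rw [Finset.Icc_eq_empty (by omega)]
      simp [show 2*(t+2) - 1 = 2*t+3 from by omega, show 2*(t+1)+1 = 2*t+3 from by omega]
    · rw [Finset.sum_Icc_succ_top h]
      have := ih p h1 (by omega)
      have h4 : Nat.fib (2*t+3) = Nat.fib (2*t+1) + Nat.fib (2*t+2) := by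
        have h7 := Nat.fib_add_two (n := 2*t+1)
        have e1 : 2*t+1+2 = 2*t+3 := rfl
        have e2 : 2*t+1+1 = 2*t+2 := rfl
        rw [e1, e2] at h7
        omega
      have h5 : 2*(t+1)+1 = 2*t+3 := by omega
      have h6 : 2*(t+1) = 2*t+2 := by omega
      rw [h5, h6]
      omega

lemma sum_odd_tel : ∀ (l : ℕ), (∑ s ∈ Icc 1 l, Nat.fib (2*s - 1)) = Nat.fib (2*l) := by
  intro l
  induction l with
  | zero => simp
  | succ l ih =>
    rw [Finset.sum_Icc_succ_top (by omega), ih]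
    have h4 : Nat.fib (2*l+2) = Nat.fib (2*l) + Nat.fib (2*l+1) := Nat.fib_add_two
    have h5 : 2*(l+1) - 1 = 2*l+1 := by omega
    have h6 : 2*(l+1) = 2*l+2 := by omega
    rw [h5, h6]
    omega

/-- Zeckendorf-type bound: a sum over nonadjacent indices in `[b+1, M]`. -/
lemma zbound : ∀ (N : ℕ) (s : Finset ℕ) (b M : ℕ), s.card ≤ N →
    (∀ i ∈ s, i + 1 ∉ s) → (∀ i ∈ s, b + 1 ≤ i ∧ i ≤ M) → b ≤ M + 1 →
    (∑ i ∈ s, Nat.fib i) + Nat.fib b ≤ Nat.fib (M + 1) := by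
  intro N
  induction N with
  | zero =>
    intro s b M hc _ _ hbM
    have : s = ∅ := Finset.card_eq_zero.mp (by omega)
    subst this
    simpa using Nat.fib_mono (by omega)
  | succ N ih =>
    intro s b M hc hna hmem hbM
    rcases s.eq_empty_or_nonempty with rfl | hne
    · simpa using Nat.fib_mono (by omega)
    · set x := s.max' hne with hx
      have hxs : x ∈ s := s.max'_mem hne
      have hxle : x ≤ M := (hmem x hxs).2
      have hxge : b + 1 ≤ x := (hmem x hxs).1
      have hsum : (∑ i ∈ s, Nat.fib i) = Nat.fib x + ∑ i ∈ s.erase x, Nat.fib i := by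
        rw [← Finset.add_sum_erase _ _ hxs]
      have herase : ∀ i ∈ s.erase x, b + 1 ≤ i ∧ i ≤ x - 2 := by
        intro i hi
        have his : i ∈ s := Finset.mem_of_mem_erase hi
        have hineq : i ≠ x := Finset.ne_of_mem_erase hi
        have hile : i ≤ x := Finset.le_max' s i his
        have : i ≠ x - 1 := by
          intro h
          have : i + 1 = x := by omega
          exact hna i his (this ▸ hxs)
        exact ⟨(hmem i his).1, by omega⟩
      rcases (s.erase x).eq_empty_or_nonempty with he | hne2
      · rw [hsum, he]
        simp only [Finset.sum_empty, add_zero]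
        have h1 : Nat.fib b ≤ Nat.fib (x - 1) := Nat.fib_mono (by omega)
        have h2 : Nat.fib x + Nat.fib (x - 1) = Nat.fib (x + 1) := by
          have := Nat.fib_add_two (n := x - 1)
          have hx1 : x - 1 + 2 = x + 1 := by omega
          have hx2 : x - 1 + 1 = x := by omega
          rw [hx1, hx2] at this
          omega
        have h3 : Nat.fib (x+1) ≤ Nat.fib (M+1) := Nat.fib_mono (by omega)
        omega
      · obtain ⟨y, hy⟩ := hne2
        have hby : b + 1 ≤ y ∧ y ≤ x - 2 := herase y hy
        have hcard : (s.erase x).card ≤ N := by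
          have := Finset.card_erase_of_mem hxs
          have := Finset.card_pos.mpr hne
          omega
        have hihx := ih (s.erase x) b (x - 2) hcard
          (fun i hi => by
            intro hcon
            exact hna i (Finset.mem_of_mem_erase hi) (Finset.mem_of_mem_erase hcon))
          herase (by omega)
        have h2 : Nat.fib x + Nat.fib (x - 1) = Nat.fib (x + 1) := by
          have := Nat.fib_add_two (n := x - 1)
          have hx1 : x - 1 + 2 = x + 1 := by omega
          have hx2 : x - 1 + 1 = x := by omega
          rw [hx1, hx2] at this
          omega
        have h3 : Nat.fib (x+1) ≤ Nat.fib (M+1) := Nat.fib_mono (by omega)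
        have hx21 : x - 2 + 1 = x - 1 := by omega
        rw [hx21] at hihx
        omega


lemma IsCG.fib_le {n : ℕ} {c : ℕ →₀ ℕ} (h : IsCG n c) {i : ℕ} (hi : 1 ≤ c i) :
    Nat.fib (2 * i) ≤ n := by
  obtain ⟨h1, h2, h3, h4⟩ := h
  have hmem : i ∈ c.support := Finsupp.mem_support_iff.mpr (by omega)
  have : c i * Nat.fib (2 * i) ≤ c.sum (fun i a => a * Nat.fib (2 * i)) :=
    Finset.single_le_sum (f := fun j => c j * Nat.fib (2 * j)) (fun j _ => Nat.zero_le _) hmem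
  calc Nat.fib (2*i) = 1 * Nat.fib (2*i) := (one_mul _).symm
    _ ≤ c i * Nat.fib (2*i) := Nat.mul_le_mul_right _ hi
    _ ≤ _ := by omega

lemma sum_single_add {c : ℕ →₀ ℕ} (q d : ℕ) :
    (c + Finsupp.single q d).sum (fun i a => a * Nat.fib (2 * i))
      = c.sum (fun i a => a * Nat.fib (2 * i)) + d * Nat.fib (2 * q) := by
  rw [Finsupp.sum_add_index' (by intro i; simp) (by intro i a b; ring)]
  congr 1
  exact Finsupp.sum_single_index (by simp)

lemma glue1 {V : ℕ} {c : ℕ →₀ ℕ} (h : IsCG V c) (q : ℕ) (hq : 1 ≤ q)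
    (hV : V < Nat.fib (2 * q)) :
    IsCG (V + Nat.fib (2 * q)) (c + Finsupp.single q 1) := by
  have hcq : c q = 0 := by
    by_contra hc
    exact absurd (IsCG.fib_le h (i := q) (by omega)) (by omega)
  obtain ⟨h1, h2, h3, h4⟩ := h
  have happ : ∀ i, ((c + Finsupp.single q 1) : ℕ →₀ ℕ) i = c i + if q = i then 1 else 0 := by
    intro i; rw [Finsupp.add_apply, Finsupp.single_apply]
  have hlow : ∀ i, c i = 2 → i < q := by
    intro i hi
    have := IsCG.fib_le ⟨h1,h2,h3,h4⟩ (i := i) (by omega)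
    by_contra hc
    exact absurd (Nat.fib_mono (by omega : 2*q ≤ 2*i)) (by omega)
  refine ⟨?_, ?_, ?_, ?_⟩
  · intro i; rw [happ]; split <;> rename_i hqi
    · subst hqi; omega
    · have := h1 i; omega
  · rw [happ]; have := h1 0; split <;> omega
  · intro i₁ i₂ hlt ha hb
    rw [happ] at ha hb
    have ha' : c i₁ = 2 := by
      by_cases hq1 : q = i₁
      · subst hq1; rw [if_pos rfl] at ha; omega
      · rw [if_neg hq1] at ha; omega
    have hb' : c i₂ = 2 := by
      by_cases hq1 : q = i₂
      · subst hq1; rw [if_pos rfl] at hb; omega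
      · rw [if_neg hq1] at hb; omega
    obtain ⟨j, hj1, hj2, hj3⟩ := h3 i₁ i₂ hlt ha' hb'
    refine ⟨j, hj1, hj2, ?_⟩
    rw [happ]
    have : i₂ < q := hlow i₂ hb'
    have : q ≠ j := by omega
    simp [this, hj3]
  · rw [sum_single_add, ← h4]; ring

lemma glue2 {V : ℕ} {c : ℕ →₀ ℕ} (h : IsCG V c) (q : ℕ) (hq : 1 ≤ q)
    (hV : V < Nat.fib (2 * q - 1)) :
    IsCG (V + 2 * Nat.fib (2 * q)) (c + Finsupp.single q 2) := by
  have hVq : V < Nat.fib (2 * q) := lt_of_lt_of_le hV (Nat.fib_mono (by omega))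
  have hcq : c q = 0 := by
    by_contra hc
    exact absurd (IsCG.fib_le h (i := q) (by omega)) (by omega)
  obtain ⟨h1, h2, h3, h4⟩ := h
  have happ : ∀ i, ((c + Finsupp.single q 2) : ℕ →₀ ℕ) i = c i + if q = i then 2 else 0 := by
    intro i; rw [Finsupp.add_apply, Finsupp.single_apply]
  have hlow : ∀ i, 1 ≤ c i → i < q := by
    intro i hi
    have := IsCG.fib_le ⟨h1,h2,h3,h4⟩ (i := i) hi
    by_contra hc
    exact absurd (Nat.fib_mono (by omega : 2*q ≤ 2*i)) (by omega)
  refine ⟨?_, ?_, ?_, ?_⟩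
  · intro i; rw [happ]; split <;> rename_i hqi
    · subst hqi; omega
    · have := h1 i; omega
  · rw [happ]; have := h1 0; split <;> omega
  · intro i₁ i₂ hlt ha hb
    rw [happ] at ha hb
    by_cases hq2 : q = i₂
    · -- new 2 on top; need a zero in (i₁, q)
      subst hq2
      have ha' : c i₁ = 2 := by rw [if_neg (by omega : q ≠ i₁)] at ha; omega
      have hi₁ : 1 ≤ i₁ := by
        rcases Nat.eq_zero_or_pos i₁ with rfl | h; · omega
        · exact h
      by_contra hcon
      push_neg at hcon
      have hall : ∀ j ∈ Finset.Icc (i₁+1) (q-1), 1 ≤ c j := by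
        intro j hj
        simp only [Finset.mem_Icc] at hj
        have hne : q ≠ j := by omega
        have := hcon j (by omega) (by omega)
        rw [happ j] at this
        simp [hne] at this
        omega
      -- V ≥ 2 * fib (2 i₁) + ∑_{j=i₁+1}^{q-1} fib (2 j) ≥ fib (2q-1): contradiction
      have hsub : insert i₁ (Finset.Icc (i₁+1) (q-1)) ⊆ c.support := by
        intro j hj
        rcases Finset.mem_insert.mp hj with rfl | hj
        · exact Finsupp.mem_support_iff.mpr (by omega)
        · exact Finsupp.mem_support_iff.mpr (by have := hall j hj; omega)
      have hVsum : V = ∑ j ∈ c.support, c j * Nat.fib (2 * j) := h4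
      have hge : ∑ j ∈ insert i₁ (Finset.Icc (i₁+1) (q-1)), c j * Nat.fib (2*j) ≤ V := by
        rw [hVsum]
        exact Finset.sum_le_sum_of_subset_of_nonneg hsub (fun j _ _ => Nat.zero_le _)
      rw [Finset.sum_insert (by simp)] at hge
      have hterm : ∀ j ∈ Finset.Icc (i₁+1) (q-1), Nat.fib (2*j) ≤ c j * Nat.fib (2*j) := by
        intro j hj
        have := hall j hj
        calc Nat.fib (2*j) = 1 * Nat.fib (2*j) := (one_mul _).symm
          _ ≤ c j * Nat.fib (2*j) := Nat.mul_le_mul_right _ this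
      have hge2 : (∑ j ∈ Finset.Icc (i₁+1) (q-1), Nat.fib (2*j))
          ≤ ∑ j ∈ Finset.Icc (i₁+1) (q-1), c j * Nat.fib (2*j) :=
        Finset.sum_le_sum hterm
      have htel := sum_even_tel (q-1) (i₁+1) (by omega) (by omega)
      have he1 : 2*(i₁+1) - 1 = 2*i₁+1 := by omega
      have he2 : 2*(q-1) + 1 = 2*q - 1 := by omega
      rw [he1, he2] at htel
      have hf1 : Nat.fib (2*i₁+1) ≤ 2 * Nat.fib (2*i₁) := by
        have hadd := Nat.fib_add_two (n := 2*i₁ - 1)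
        have e1 : 2*i₁ - 1 + 2 = 2*i₁+1 := by omega
        have e2 : 2*i₁ - 1 + 1 = 2*i₁ := by omega
        rw [e1, e2] at hadd
        have : Nat.fib (2*i₁-1) ≤ Nat.fib (2*i₁) := Nat.fib_mono (by omega)
        omega
      have hca : c i₁ * Nat.fib (2*i₁) = 2 * Nat.fib (2*i₁) := by rw [ha']
      omega
    · have hb' : c i₂ = 2 := by rw [if_neg hq2] at hb; omega
      have hi₂q : i₂ < q := hlow i₂ (by omega)
      have ha' : c i₁ = 2 := by
        by_cases hq1 : q = i₁
        · subst hq1; rw [if_pos rfl] at ha; omega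
        · rw [if_neg hq1] at ha; omega
      obtain ⟨j, hj1, hj2, hj3⟩ := h3 i₁ i₂ hlt ha' hb'
      refine ⟨j, hj1, hj2, ?_⟩
      rw [happ]
      have : q ≠ j := by omega
      simp [this, hj3]
  · rw [sum_single_add, ← h4]

lemma chain : ∀ (t p V : ℕ) (c : ℕ →₀ ℕ), IsCG V c → 1 ≤ p → V < Nat.fib (2 * p) →
    ∃ c', IsCG (V + ∑ s ∈ Finset.Icc p t, Nat.fib (2 * s)) c' ∧ ∀ i < p, c' i = c i := by
  intro t
  induction t with
  | zero =>
    intro p V c h hp hV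
    refine ⟨c, ?_, fun i _ => rfl⟩
    rw [Finset.Icc_eq_empty (by omega)]
    simpa using h
  | succ t ih =>
    intro p V c h hp hV
    rcases Nat.lt_or_ge (t+1) p with hlt | hge
    · refine ⟨c, ?_, fun i _ => rfl⟩
      rw [Finset.Icc_eq_empty (by omega)]
      simpa using h
    · obtain ⟨c₁, hc₁, hpre⟩ := ih p V c h hp hV
      have htel := sum_even_tel t p hp (by omega)
      have hbound : V + ∑ s ∈ Finset.Icc p t, Nat.fib (2*s) < Nat.fib (2*(t+1)) := by
        have h1 : Nat.fib (2*p) = Nat.fib (2*p - 1) + Nat.fib (2*p - 2) := by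
          have hadd := Nat.fib_add_two (n := 2*p - 2)
          have e1 : 2*p - 2 + 2 = 2*p := by omega
          have e2 : 2*p - 2 + 1 = 2*p - 1 := by omega
          rw [e1, e2] at hadd
          omega
        have h2 : Nat.fib (2*p - 2) ≤ Nat.fib (2*t) := Nat.fib_mono (by omega)
        have h3 : Nat.fib (2*(t+1)) = Nat.fib (2*t) + Nat.fib (2*t+1) := by
          have hadd := Nat.fib_add_two (n := 2*t)
          have e1 : 2*t + 2 = 2*(t+1) := by omega
          rw [e1] at hadd
          omega
        omega
      obtain hglue := glue1 hc₁ (t+1) (by omega) hbound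
      refine ⟨c₁ + Finsupp.single (t+1) 1, ?_, ?_⟩
      · rw [Finset.sum_Icc_succ_top hge, ← add_assoc]
        exact hglue
      · intro i hi
        rw [Finsupp.add_apply, Finsupp.single_apply, if_neg (by omega), add_zero]
        exact hpre i hi

lemma even_window (n : ℕ) (hn : 1 ≤ n) :
    ∃ m, 1 ≤ m ∧ Nat.fib (2*m) ≤ n ∧ n < Nat.fib (2*(m+1)) := by
  classical
  have hP1 : Nat.fib (2*1) ≤ n := by simpa using hn
  have hfg := Nat.findGreatest_spec (P := fun m => Nat.fib (2*m) ≤ n) (n := n+2)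
    (m := 1) (by omega) hP1
  have hnot : ¬ Nat.fib (2*(n+2)) ≤ n := by
    push_neg
    calc n < Nat.fib (n+2) := lt_fib_add_two n
      _ ≤ Nat.fib (2*(n+2)) := Nat.fib_mono (by omega)
  have hle := Nat.findGreatest_le (P := fun m => Nat.fib (2*m) ≤ n) (n+2)
  have hne : Nat.findGreatest (fun m => Nat.fib (2*m) ≤ n) (n+2) ≠ n+2 :=
    fun h => hnot (h ▸ hfg)
  have hgt := Nat.findGreatest_is_greatest (P := fun m => Nat.fib (2*m) ≤ n) (n := n+2)
    (k := Nat.findGreatest (fun m => Nat.fib (2*m) ≤ n) (n+2) + 1) (by omega) (by omega)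
  exact ⟨Nat.findGreatest (fun m => Nat.fib (2*m) ≤ n) (n+2),
    Nat.le_findGreatest (P := fun m => Nat.fib (2*m) ≤ n) (n := n+2) (by omega) hP1, hfg, lt_of_not_ge hgt⟩

lemma zeck_window (n : ℕ) (hn : 1 ≤ n) :
    ∃ q, 2 ≤ q ∧ Nat.fib q ≤ n ∧ n < Nat.fib (q+1) := by
  classical
  have hP1 : 2 ≤ 2 ∧ Nat.fib 2 ≤ n := ⟨le_refl 2, by simpa using hn⟩
  have hfg := Nat.findGreatest_spec (P := fun q => 2 ≤ q ∧ Nat.fib q ≤ n) (n := n+2)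
    (m := 2) (by omega) hP1
  have hnot : ¬ (2 ≤ n+2 ∧ Nat.fib (n+2) ≤ n) := by
    rintro ⟨-, h⟩
    exact absurd (lt_fib_add_two n) (by omega)
  have hle := Nat.findGreatest_le (P := fun q => 2 ≤ q ∧ Nat.fib q ≤ n) (n+2)
  have hne : Nat.findGreatest (fun q => 2 ≤ q ∧ Nat.fib q ≤ n) (n+2) ≠ n+2 :=
    fun h => hnot (h ▸ hfg)
  have hgt := Nat.findGreatest_is_greatest (P := fun q => 2 ≤ q ∧ Nat.fib q ≤ n) (n := n+2)
    (k := Nat.findGreatest (fun q => 2 ≤ q ∧ Nat.fib q ≤ n) (n+2) + 1) (by omega) (by omega)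
  refine ⟨_, hfg.1, hfg.2, ?_⟩
  by_contra hcon
  push_neg at hcon
  exact hgt ⟨by omega, hcon⟩

lemma cg_exists : ∀ n : ℕ, ∃ c, IsCG n c := by
  intro n
  induction n using Nat.strong_induction_on with
  | _ n ih =>
    rcases Nat.eq_zero_or_pos n with rfl | hn
    · exact ⟨0, by intro i; simp, by simp, by intro i₁ i₂ _ h; simp at h, by simp⟩
    · obtain ⟨m, hm1, hmub, hnext⟩ := even_window n hn
      have hfibs : Nat.fib (2*m+2) = Nat.fib (2*m) + Nat.fib (2*m+1) := Nat.fib_add_two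
      have hfibs2 : Nat.fib (2*m+1) = Nat.fib (2*m-1) + Nat.fib (2*m) := by
        have hadd := Nat.fib_add_two (n := 2*m-1)
        have e1 : 2*m-1+2 = 2*m+1 := by omega
        have e2 : 2*m-1+1 = 2*m := by omega
        rw [e1, e2] at hadd
        omega
      have hfpos : 1 ≤ Nat.fib (2*m) := Nat.fib_pos.mpr (by omega)
      have he : 2*(m+1) = 2*m+2 := by omega
      rw [he] at hnext
      rcases Nat.lt_or_ge n (2 * Nat.fib (2*m)) with hlt | hge
      · obtain ⟨c, hc⟩ := ih (n - Nat.fib (2*m)) (by omega)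
        refine ⟨c + Finsupp.single m 1, ?_⟩
        have := glue1 hc m hm1 (by omega)
        have heq : n - Nat.fib (2*m) + Nat.fib (2*m) = n := by omega
        rwa [heq] at this
      · obtain ⟨c, hc⟩ := ih (n - 2 * Nat.fib (2*m)) (by omega)
        refine ⟨c + Finsupp.single m 2, ?_⟩
        have := glue2 hc m hm1 (by omega)
        have heq : n - 2 * Nat.fib (2*m) + 2 * Nat.fib (2*m) = n := by omega
        rwa [heq] at this

lemma IsCG.term_le {n : ℕ} {c : ℕ →₀ ℕ} (h : IsCG n c) (i : ℕ) :
    c i * Nat.fib (2 * i) ≤ n := by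
  obtain ⟨h1, h2, h3, h4⟩ := h
  rcases Nat.eq_zero_or_pos (c i) with hz | hp
  · simp [hz]
  · have hmem : i ∈ c.support := Finsupp.mem_support_iff.mpr (by omega)
    have : c i * Nat.fib (2 * i) ≤ c.sum (fun i a => a * Nat.fib (2 * i)) :=
      Finset.single_le_sum (f := fun j => c j * Nat.fib (2 * j)) (fun j _ => Nat.zero_le _) hmem
    omega

/-- Core bound for CG digit strings: partial sums are `< fib (2m+2)`. -/
lemma cg_bound_core : ∀ (m : ℕ) (c : ℕ → ℕ), (∀ i, c i ≤ 2) → c 0 = 0 →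
    (∀ i₁ i₂, i₁ < i₂ → c i₁ = 2 → c i₂ = 2 → ∃ j, i₁ < j ∧ j < i₂ ∧ c j = 0) →
    (∑ i ∈ Finset.range (m+1), c i * Nat.fib (2*i)) + 1 ≤ Nat.fib (2*m+2) := by
  intro m
  induction m using Nat.strong_induction_on with
  | _ m ih =>
    intro c h1 h2 h3
    rcases Nat.eq_zero_or_pos m with rfl | hm
    · simp [h2]
    · have hsplit : (∑ i ∈ Finset.range (m+1), c i * Nat.fib (2*i))
          = (∑ i ∈ Finset.range m, c i * Nat.fib (2*i)) + c m * Nat.fib (2*m) :=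
        Finset.sum_range_succ _ m
      have hf1 : Nat.fib (2*m+2) = Nat.fib (2*m) + Nat.fib (2*m+1) := Nat.fib_add_two
      have hf2 : Nat.fib (2*m+1) = Nat.fib (2*m-1) + Nat.fib (2*m) := by
        have hadd := Nat.fib_add_two (n := 2*m-1)
        have e1 : 2*m-1+2 = 2*m+1 := by omega
        have e2 : 2*m-1+1 = 2*m := by omega
        rw [e1, e2] at hadd; omega
      rcases Nat.lt_or_ge (c m) 2 with hcm | hcm
      · -- c m ≤ 1
        have hih := ih (m-1) (by omega) c h1 h2 h3
        have e1 : m - 1 + 1 = m := by omega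
        rw [e1] at hih
        have e2 : 2*(m-1)+2 = 2*m := by omega
        rw [e2] at hih
        have hmono : Nat.fib (2*m) ≤ Nat.fib (2*m+1) := Nat.fib_mono (by omega)
        have : c m * Nat.fib (2*m) ≤ 1 * Nat.fib (2*m) := Nat.mul_le_mul_right _ (by omega)
        omega
      · -- c m = 2
        have hcm2 : c m = 2 := le_antisymm (h1 m) hcm
        classical
        obtain ⟨p, hple, hp0, hgreat⟩ :
            ∃ p, p ≤ m-1 ∧ c p = 0 ∧ ∀ s, p < s → s ≤ m-1 → c s ≠ 0 := by
          refine ⟨Nat.findGreatest (fun p => c p = 0) (m-1), Nat.findGreatest_le _,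
            Nat.findGreatest_spec (P := fun p => c p = 0) (m := 0) (Nat.zero_le _) h2, ?_⟩
          intro s hs1 hs2
          exact Nat.findGreatest_is_greatest (P := fun p => c p = 0) (n := m-1) hs1 hs2
        have hall : ∀ s, p < s → s ≤ m-1 → c s = 1 := by
          intro s hs1 hs2
          have hns : ¬ c s = 0 := hgreat s hs1 hs2
          rcases Nat.lt_or_ge (c s) 2 with h | h
          · omega
          · exfalso
            have hcs2 : c s = 2 := le_antisymm (h1 s) h
            obtain ⟨j, hj1, hj2, hj3⟩ := h3 s m (by omega) hcs2 hcm2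
            exact hgreat j (by omega) (by omega) hj3
        -- split: range m = range (p+1) ∪ Ico (p+1) m
        have hsplit2 : (∑ i ∈ Finset.range m, c i * Nat.fib (2*i))
            = (∑ i ∈ Finset.range (p+1), c i * Nat.fib (2*i))
              + ∑ i ∈ Finset.Ico (p+1) m, c i * Nat.fib (2*i) := by
          rw [Finset.range_eq_Ico, Finset.range_eq_Ico]
          exact (Finset.sum_Ico_consecutive (f := fun i => c i * Nat.fib (2*i)) (by omega : 0 ≤ p+1) (by omega : p+1 ≤ m)).symm
        have hmid : (∑ i ∈ Finset.Ico (p+1) m, c i * Nat.fib (2*i))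
            = ∑ i ∈ Finset.Ico (p+1) m, Nat.fib (2*i) := by
          apply Finset.sum_congr rfl
          intro i hi
          simp only [Finset.mem_Ico] at hi
          rw [hall i hi.1 (by omega), one_mul]
        have hico : Finset.Ico (p+1) m = Finset.Icc (p+1) (m-1) := by
          rw [← Finset.Ico_add_one_right_eq_Icc]
          congr 1
          omega
        have htel := sum_even_tel (m-1) (p+1) (by omega) (by omega)
        have e3 : 2*(p+1)-1 = 2*p+1 := by omega
        have e4 : 2*(m-1)+1 = 2*m-1 := by omega
        rw [e3, e4] at htel
        -- bound on the part below p
        have hbelow : (∑ i ∈ Finset.range (p+1), c i * Nat.fib (2*i)) + 1 ≤ Nat.fib (2*p+1) := by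
          rcases Nat.eq_zero_or_pos p with h0 | hpp
          · rw [h0]; simp [h2]
          · have hih := ih (p-1) (by omega) c h1 h2 h3
            have e5 : p - 1 + 1 = p := by omega
            have e6 : 2*(p-1)+2 = 2*p := by omega
            rw [e5, e6] at hih
            have : (∑ i ∈ Finset.range (p+1), c i * Nat.fib (2*i))
                = (∑ i ∈ Finset.range p, c i * Nat.fib (2*i)) + c p * Nat.fib (2*p) :=
              Finset.sum_range_succ _ p
            have hmono : Nat.fib (2*p) ≤ Nat.fib (2*p+1) := Nat.fib_mono (by omega)
            rw [hp0] at this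
            omega
        rw [hsplit, hsplit2, hmid, hico, hcm2]
        omega

lemma cg_sum_eq {c : ℕ →₀ ℕ} {m : ℕ} (h : ∀ i, m < i → c i = 0) :
    c.sum (fun i a => a * Nat.fib (2 * i)) = ∑ i ∈ Finset.range (m+1), c i * Nat.fib (2*i) := by
  apply Finsupp.sum_of_support_subset
  · intro i hi
    rw [Finset.mem_range]
    by_contra hcon
    exact absurd (h i (by omega)) (Finsupp.mem_support_iff.mp hi)
  · intro i _
    simp

lemma cg_bound {n : ℕ} {c : ℕ →₀ ℕ} (h : IsCG n c) {m : ℕ} (hm : ∀ i, m < i → c i = 0) :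
    n + 1 ≤ Nat.fib (2*m+2) := by
  obtain ⟨h1, h2, h3, h4⟩ := h
  rw [h4, cg_sum_eq hm]
  exact cg_bound_core m c h1 h2 h3

lemma erase_IsCG {n : ℕ} {c : ℕ →₀ ℕ} (h : IsCG n c) {m : ℕ} (hm : 1 ≤ m) :
    IsCG (n - c m * Nat.fib (2*m)) (c.erase m) := by
  obtain ⟨h1, h2, h3, h4⟩ := h
  have hterm : c m * Nat.fib (2*m) ≤ n := IsCG.term_le ⟨h1,h2,h3,h4⟩ m
  refine ⟨?_, ?_, ?_, ?_⟩
  · intro i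
    rcases eq_or_ne i m with rfl | hne
    · rw [Finsupp.erase_same]; omega
    · rw [Finsupp.erase_ne hne]; exact h1 i
  · rw [Finsupp.erase_ne (by omega)]; exact h2
  · intro i₁ i₂ hlt ha hb
    have ha' : c i₁ = 2 := by
      rcases eq_or_ne i₁ m with rfl | hne
      · rw [Finsupp.erase_same] at ha; omega
      · rwa [Finsupp.erase_ne hne] at ha
    have hb' : c i₂ = 2 := by
      rcases eq_or_ne i₂ m with rfl | hne
      · rw [Finsupp.erase_same] at hb; omega
      · rwa [Finsupp.erase_ne hne] at hb
    obtain ⟨j, hj1, hj2, hj3⟩ := h3 i₁ i₂ hlt ha' hb'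
    refine ⟨j, hj1, hj2, ?_⟩
    rcases eq_or_ne j m with rfl | hne
    · exact Finsupp.erase_same
    · rwa [Finsupp.erase_ne hne]
  · have h5 : c m * Nat.fib (2*m) + (c.erase m).sum (fun i a => a * Nat.fib (2*i))
        = c.sum (fun i a => a * Nat.fib (2*i)) :=
      Finsupp.add_sum_erase' c m (fun i a => a * Nat.fib (2 * i)) (by intro i; simp)
    omega

lemma support_max_spec {n : ℕ} {c : ℕ →₀ ℕ} (h : IsCG n c) (hn : 1 ≤ n) :
    ∃ m, 1 ≤ m ∧ 1 ≤ c m ∧ (∀ i, m < i → c i = 0) ∧ Nat.fib (2*m) ≤ n ∧ n + 1 ≤ Nat.fib (2*m+2) := by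
  have hne : c.support.Nonempty := by
    by_contra hcon
    rw [Finset.not_nonempty_iff_eq_empty] at hcon
    have := h.2.2.2
    rw [Finsupp.sum, hcon] at this
    simp at this
    omega
  set m := c.support.max' hne with hm
  have hmem : m ∈ c.support := c.support.max'_mem hne
  have hcm : 1 ≤ c m := by
    have := Finsupp.mem_support_iff.mp hmem
    omega
  have hm1 : 1 ≤ m := by
    rcases Nat.eq_zero_or_pos m with h0 | h; · rw [h0] at hcm; rw [h.2.1] at hcm; omega
    · exact h
  have habove : ∀ i, m < i → c i = 0 := by
    intro i hi
    by_contra hcon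
    have : i ∈ c.support := Finsupp.mem_support_iff.mpr hcon
    have := Finset.le_max' _ i this
    omega
  exact ⟨m, hm1, hcm, habove, h.fib_le hcm, cg_bound h habove⟩

lemma cg_unique : ∀ (n : ℕ) (c c' : ℕ →₀ ℕ), IsCG n c → IsCG n c' → c = c' := by
  intro n
  induction n using Nat.strong_induction_on with
  | _ n ih =>
    intro c c' h h'
    rcases Nat.eq_zero_or_pos n with rfl | hn
    · have hz : ∀ (d : ℕ →₀ ℕ), IsCG 0 d → ∀ i, d i = 0 := by
        intro d hd i
        rcases Nat.eq_zero_or_pos i with rfl | hi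
        · exact hd.2.1
        · by_contra hcon
          have := hd.fib_le (i := i) (by omega)
          have : 1 ≤ Nat.fib (2*i) := Nat.fib_pos.mpr (by omega)
          omega
      ext i
      rw [hz c h i, hz c' h' i]
    · obtain ⟨m, hm1, hcm, habove, hlb, hub⟩ := support_max_spec h hn
      obtain ⟨m', hm1', hcm', habove', hlb', hub'⟩ := support_max_spec h' hn
      have hmm : m = m' := by
        rcases lt_trichotomy m m' with hlt | heq | hgt
        · exfalso
          have : Nat.fib (2*m+2) ≤ Nat.fib (2*m') := Nat.fib_mono (by omega)
          omega
        · exact heq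
        · exfalso
          have : Nat.fib (2*m'+2) ≤ Nat.fib (2*m) := Nat.fib_mono (by omega)
          omega
      subst hmm
      -- digits at m agree
      have herase := erase_IsCG h hm1
      have herase' := erase_IsCG h' hm1
      have hrb : (n - c m * Nat.fib (2*m)) + 1 ≤ Nat.fib (2*m) := by
        have : ∀ i, m - 1 < i → (c.erase m) i = 0 := by
          intro i hi
          rcases eq_or_ne i m with rfl | hne
          · exact Finsupp.erase_same
          · rw [Finsupp.erase_ne hne]; exact habove i (by omega)
        have := cg_bound herase this
        have e : 2*(m-1)+2 = 2*m := by omega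
        rwa [e] at this
      have hrb' : (n - c' m * Nat.fib (2*m)) + 1 ≤ Nat.fib (2*m) := by
        have : ∀ i, m - 1 < i → (c'.erase m) i = 0 := by
          intro i hi
          rcases eq_or_ne i m with rfl | hne
          · exact Finsupp.erase_same
          · rw [Finsupp.erase_ne hne]; exact habove' i (by omega)
        have := cg_bound herase' this
        have e : 2*(m-1)+2 = 2*m := by omega
        rwa [e] at this
      have hterm := h.term_le m
      have hterm' := h'.term_le m
      have hfpos : 1 ≤ Nat.fib (2*m) := Nat.fib_pos.mpr (by omega)
      have hc2 : c m ≤ 2 := h.1 m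
      have hc2' : c' m ≤ 2 := h'.1 m
      have hdig : c m = c' m := by
        rcases lt_trichotomy (c m) (c' m) with hlt | heq | hgt
        · exfalso
          -- c m = 1, c' m = 2
          have h1' : c m = 1 ∧ c' m = 2 := by omega
          rw [h1'.1, one_mul] at hrb
          rw [h1'.2] at hterm'
          omega
        · exact heq
        · exfalso
          have h1' : c' m = 1 ∧ c m = 2 := by omega
          rw [h1'.1, one_mul] at hrb'
          rw [h1'.2] at hterm
          omega
      have heq : c.erase m = c'.erase m := by
        have hge1 : 1 * 1 ≤ c m * Nat.fib (2*m) := Nat.mul_le_mul hcm hfpos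
        apply ih (n - c m * Nat.fib (2*m)) (by omega) _ _ herase
        rw [hdig]
        exact herase'
      ext i
      rcases eq_or_ne i m with rfl | hne
      · exact hdig
      · have := congrArg (fun f => Finsupp.erase m f i) heq
        simpa [Finsupp.erase_ne hne] using this

lemma fib_rec {x : ℕ} (hx : 2 ≤ x) : Nat.fib x = Nat.fib (x-1) + Nat.fib (x-2) := by
  have h := Nat.fib_add_two (n := x-2)
  have e1 : x-2+2 = x := by omega
  have e2 : x-2+1 = x-1 := by omega
  rw [e1, e2] at h
  omega

lemma min'_erase_eq {C : Finset ℕ} (hC : C.Nonempty) {x : ℕ}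
    (hne : C.min' hC ≠ x) (he : (C.erase x).Nonempty) :
    (C.erase x).min' he = C.min' hC := by
  apply le_antisymm
  · exact Finset.min'_le _ _ (Finset.mem_erase.mpr ⟨hne.symm.imp (fun h => h.symm) |>.mt (by tauto), C.min'_mem hC⟩)
  · exact Finset.le_min' _ _ _ (fun y hy => C.min'_le _ (Finset.mem_of_mem_erase hy))

lemma min_eq_of_erase_max_empty {C : Finset ℕ} (hC : C.Nonempty)
    (h : C.erase (C.max' hC) = ∅) : C.min' hC = C.max' hC := by
  by_contra hcon
  have : C.min' hC ∈ C.erase (C.max' hC) :=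
    Finset.mem_erase.mpr ⟨hcon, C.min'_mem hC⟩
  rw [h] at this
  exact absurd this (Finset.notMem_empty _)

lemma min_ne_max_of_erase_max_nonempty {C : Finset ℕ} (hC : C.Nonempty)
    (h : (C.erase (C.max' hC)).Nonempty) : C.min' hC ≠ C.max' hC := by
  obtain ⟨y, hy⟩ := h
  have hyC := Finset.mem_of_mem_erase hy
  have hyne := Finset.ne_of_mem_erase hy
  intro hcon
  have h1 := C.min'_le y hyC
  have h2 := C.le_max' y hyC
  rw [hcon] at h1
  omega

/-- Bound: `∑_{i ∈ C} F_i + F_{2k} + j < F_{M+1}` for nonadjacent `C ⊆ [2k+2, M]`. -/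
lemma wbound {k : ℕ} (hk : 1 ≤ k) {C : Finset ℕ} {M j : ℕ}
    (hna : ∀ i ∈ C, i + 1 ∉ C) (hmem : ∀ i ∈ C, 2*k+2 ≤ i ∧ i ≤ M)
    (hM : 2*k+1 ≤ M) (hj : j < Nat.fib (2*k-1)) :
    (∑ i ∈ C, Nat.fib i) + Nat.fib (2*k) + j < Nat.fib (M+1) := by
  have hz := zbound C.card C (2*k+1) M (le_refl _) hna hmem (by omega)
  have h1 : Nat.fib (2*k+1) = Nat.fib (2*k) + Nat.fib (2*k-1) := by
    have := fib_rec (x := 2*k+1) (by omega)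
    have e1 : 2*k+1-1 = 2*k := by omega
    have e2 : 2*k+1-2 = 2*k-1 := by omega
    rw [e1, e2] at this
    omega
  omega

/-- The base/accept configuration `F_{2k} + j`. -/
lemma accept_base {k : ℕ} (hk : 1 ≤ k) {j : ℕ} (hj : j < Nat.fib (2*k-1)) :
    ∃ c, IsCG (Nat.fib (2*k) + j) c ∧ c k = 1 := by
  obtain ⟨cj, hcj⟩ := cg_exists j
  have hjk : j < Nat.fib (2*k) := lt_of_lt_of_le hj (Nat.fib_mono (by omega))
  have hck : cj k = 0 := by
    by_contra hc
    exact absurd (hcj.fib_le (i := k) (by omega)) (by omega)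
  have hg := glue1 hcj k hk hjk
  refine ⟨cj + Finsupp.single k 1, by rwa [Nat.add_comm] at hg, ?_⟩
  rw [Finsupp.add_apply, Finsupp.single_apply, if_pos rfl, hck]

/-- The reject configuration: `F_a (a odd) + F_{2k} + j` with nothing between. -/
lemma reject_base {k : ℕ} (hk : 1 ≤ k) {a j : ℕ} (ha : 2*k+1 ≤ a) (hodd : a % 2 = 1)
    (hj : j < Nat.fib (2*k-1)) :
    ∃ c, IsCG (Nat.fib a + Nat.fib (2*k) + j) c ∧ c k = 0 := by
  obtain ⟨cj, hcj⟩ := cg_exists j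
  have hjk : j < Nat.fib (2*k) := lt_of_lt_of_le hj (Nat.fib_mono (by omega))
  have hck : cj k = 0 := by
    by_contra hc
    exact absurd (hcj.fib_le (i := k) (by omega)) (by omega)
  have hf21 : Nat.fib (2*k+1) = Nat.fib (2*k) + Nat.fib (2*k-1) := by
    have := fib_rec (x := 2*k+1) (by omega)
    have e1 : 2*k+1-1 = 2*k := by omega
    have e2 : 2*k+1-2 = 2*k-1 := by omega
    rw [e1, e2] at this; omega
  rcases eq_or_lt_of_le ha with heq | hlt
  · -- a = 2k+1 : value = fib (2k+2) + j
    have hg := glue1 hcj (k+1) (by omega) (by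
      calc j < Nat.fib (2*k-1) := hj
        _ ≤ Nat.fib (2*(k+1)) := Nat.fib_mono (by omega))
    refine ⟨cj + Finsupp.single (k+1) 1, ?_, ?_⟩
    · have hv : j + Nat.fib (2*(k+1)) = Nat.fib a + Nat.fib (2*k) + j := by
        have h1 : Nat.fib (2*k+2) = Nat.fib (2*k+1) + Nat.fib (2*k) := by
          have := fib_rec (x := 2*k+2) (by omega)
          have e1 : 2*k+2-1 = 2*k+1 := by omega
          have e2 : 2*k+2-2 = 2*k := by omega
          rw [e1, e2] at this; omega
        have e3 : 2*(k+1) = 2*k+2 := by omega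
        rw [e3, ← heq]
        omega
      rwa [hv] at hg
    · rw [Finsupp.add_apply, Finsupp.single_apply, if_neg (by omega), hck]
      omega
  · -- a = 2t+1 with t ≥ k+1
    have ht : ∃ t, a = 2*t+1 ∧ k+1 ≤ t := ⟨(a-1)/2, by omega, by omega⟩
    obtain ⟨t, hat, htk⟩ := ht
    have hg2 := glue2 hcj (k+1) (by omega) (by
      calc j < Nat.fib (2*k-1) := hj
        _ ≤ Nat.fib (2*(k+1)-1) := Nat.fib_mono (by omega))
    have hf24 : Nat.fib (2*k+4) = Nat.fib (2*k+3) + Nat.fib (2*k+2) := by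
      have := fib_rec (x := 2*k+4) (by omega)
      have e1 : 2*k+4-1 = 2*k+3 := by omega
      have e2 : 2*k+4-2 = 2*k+2 := by omega
      rw [e1, e2] at this; omega
    have hf23 : Nat.fib (2*k+3) = Nat.fib (2*k+2) + Nat.fib (2*k+1) := by
      have := fib_rec (x := 2*k+3) (by omega)
      have e1 : 2*k+3-1 = 2*k+2 := by omega
      have e2 : 2*k+3-2 = 2*k+1 := by omega
      rw [e1, e2] at this; omega
    have hb : j + 2 * Nat.fib (2*(k+1)) < Nat.fib (2*(k+2)) := by
      have e3 : 2*(k+1) = 2*k+2 := by omega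
      have e4 : 2*(k+2) = 2*k+4 := by omega
      rw [e3, e4]
      have : Nat.fib (2*k-1) ≤ Nat.fib (2*k+1) := Nat.fib_mono (by omega)
      omega
    obtain ⟨c2, hc2, hc2low⟩ := chain t (k+2) _ _ hg2 (by omega) hb
    refine ⟨c2, ?_, ?_⟩
    · have htel := sum_even_tel t (k+2) (by omega) (by omega)
      have e5 : 2*(k+2)-1 = 2*k+3 := by omega
      rw [e5] at htel
      have hv : j + 2 * Nat.fib (2*(k+1)) + (∑ s ∈ Finset.Icc (k+2) t, Nat.fib (2*s))
          = Nat.fib a + Nat.fib (2*k) + j := by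
        have hf22 : Nat.fib (2*k+2) = Nat.fib (2*k+1) + Nat.fib (2*k) := by
          have := fib_rec (x := 2*k+2) (by omega)
          have e1 : 2*k+2-1 = 2*k+1 := by omega
          have e2 : 2*k+2-2 = 2*k := by omega
          rw [e1, e2] at this; omega
        have e3 : 2*(k+1) = 2*k+2 := by omega
        rw [e3, hat]
        omega
      rwa [hv] at hc2
    · rw [hc2low k (by omega), Finsupp.add_apply, Finsupp.single_apply, if_neg (by omega), hck]
      omega

lemma fib_sum2 (x : ℕ) : Nat.fib (x+2) = Nat.fib x + Nat.fib (x+1) := Nat.fib_add_two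

lemma propD_empty {k : ℕ} (hk : 1 ≤ k) {a j : ℕ} (ha : 2*k+1 ≤ a)
    (hj : j < Nat.fib (2*k-1)) :
    ∃ c, IsCG (Nat.fib a + Nat.fib (2*k) + j) c ∧ c k + a % 2 = 1 := by
  rcases Nat.even_or_odd a with he | ho
  · -- a even, hence a ≥ 2k+2 : accept
    have ha2 : 2*k+2 ≤ a := by
      rcases he with ⟨u, hu⟩; omega
    obtain ⟨t, rfl⟩ : ∃ t, a = 2*t := ⟨a/2, by rcases he with ⟨u,hu⟩; omega⟩
    obtain ⟨c0, hc0, hck⟩ := accept_base hk hj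
    have hf21 : Nat.fib (2*k+1) = Nat.fib (2*k) + Nat.fib (2*k-1) := by
      have := fib_rec (x := 2*k+1) (by omega)
      have e1 : 2*k+1-1 = 2*k := by omega
      have e2 : 2*k+1-2 = 2*k-1 := by omega
      rw [e1, e2] at this; omega
    have hlt : Nat.fib (2*k) + j < Nat.fib (2*t) := by
      have : Nat.fib (2*k+1) ≤ Nat.fib (2*t) := Nat.fib_mono (by omega)
      omega
    have hg := glue1 hc0 t (by omega) hlt
    refine ⟨c0 + Finsupp.single t 1, ?_, ?_⟩
    · have hv : Nat.fib (2*k) + j + Nat.fib (2*t) = Nat.fib (2*t) + Nat.fib (2*k) + j := by ring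
      rwa [hv] at hg
    · rw [Finsupp.add_apply, Finsupp.single_apply, if_neg (show ¬ (t = k) by omega), hck]
      omega
  · obtain ⟨c0, hc0, hck⟩ := reject_base hk ha (Nat.odd_iff.mp ho) hj
    have h1 := Nat.odd_iff.mp ho
    exact ⟨c0, hc0, by omega⟩

lemma propD {k : ℕ} (hk : 1 ≤ k) :
    ∀ (N : ℕ) (C : Finset ℕ) (a j : ℕ), C.card ≤ N →
    (∀ i ∈ C, i + 1 ∉ C) →
    (∀ i ∈ C, 2*k+2 ≤ i ∧ i ≤ a) →
    2*k+1 ≤ a →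
    (a = 2*k+1 → C = ∅) →
    j < Nat.fib (2*k-1) →
    ∃ c, IsCG (Nat.fib a + (∑ i ∈ C, Nat.fib i) + Nat.fib (2*k) + j) c ∧
      c k + (if h : C.Nonempty then C.min' h else a) % 2 = 1 := by
  intro N
  induction N with
  | zero =>
    intro C a j hcard hna hmem ha h2k1 hj
    have hC : C = ∅ := Finset.card_eq_zero.mp (by omega)
    subst hC
    obtain ⟨c, hc, hd⟩ := propD_empty hk ha hj
    refine ⟨c, by simpa using hc, ?_⟩
    rw [dif_neg (by simp)]
    exact hd
  | succ N ih =>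
    intro C a j hcard hna hmem ha h2k1 hj
    rcases C.eq_empty_or_nonempty with rfl | hC
    · obtain ⟨c, hc, hd⟩ := propD_empty hk ha hj
      refine ⟨c, by simpa using hc, ?_⟩
      rw [dif_neg (by simp)]
      exact hd
    -- C nonempty
    have hf21 : Nat.fib (2*k+1) = Nat.fib (2*k) + Nat.fib (2*k-1) := by
      have := fib_rec (x := 2*k+1) (by omega)
      have e1 : 2*k+1-1 = 2*k := by omega
      have e2 : 2*k+1-2 = 2*k-1 := by omega
      rw [e1, e2] at this; omega
    have ha2 : 2*k+2 ≤ a := by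
      rcases eq_or_lt_of_le ha with heq | hlt
      · exact absurd hC (by rw [h2k1 heq.symm]; simp)
      · omega
    -- helper: representation for pure "E" configurations
    have hE : ∀ (D : Finset ℕ), D.card ≤ N+1 → (∀ i ∈ D, i+1 ∉ D) →
        (∀ i ∈ D, 2*k+2 ≤ i) →
        ∃ c, IsCG ((∑ i ∈ D, Nat.fib i) + Nat.fib (2*k) + j) c ∧
          c k + (if h : D.Nonempty then (D.min' h) % 2 else 0) = 1 := by
      intro D hDcard hDna hDmem
      rcases D.eq_empty_or_nonempty with rfl | hD
      · obtain ⟨c, hc, hck⟩ := accept_base hk hj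
        refine ⟨c, by simpa using hc, ?_⟩
        rw [dif_neg (by simp)]
        omega
      · have hMD : D.max' hD ∈ D := D.max'_mem hD
        have hM22 : 2*k+2 ≤ D.max' hD := hDmem _ hMD
        obtain ⟨c, hcIs, hcd⟩ := ih (D.erase (D.max' hD)) (D.max' hD) j
          (by have := Finset.card_erase_of_mem hMD
              have := Finset.card_pos.mpr hD
              omega)
          (fun i hi hcon => hDna i (Finset.mem_of_mem_erase hi) (Finset.mem_of_mem_erase hcon))
          (fun i hi => ⟨hDmem i (Finset.mem_of_mem_erase hi),
            D.le_max' i (Finset.mem_of_mem_erase hi)⟩)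
          (by omega) (fun h => absurd h (by omega)) hj
        rw [Finset.add_sum_erase _ _ hMD] at hcIs
        refine ⟨c, hcIs, ?_⟩
        rw [dif_pos hD]
        by_cases he : (D.erase (D.max' hD)).Nonempty
        · rw [dif_pos he, min'_erase_eq hD (min_ne_max_of_erase_max_nonempty hD he) he] at hcd
          exact hcd
        · rw [dif_neg he] at hcd
          have := min_eq_of_erase_max_empty hD (Finset.not_nonempty_iff_eq_empty.mp he)
          rw [this]
          exact hcd
    rw [show (if h : C.Nonempty then C.min' h else a) = C.min' hC from dif_pos hC]
    have hmnC := C.min'_mem hC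
    by_cases hA : a - 1 ∈ C
    · -- Case A : merge F_{a-1} + F_a = F_{a+1}
      have hnaA := hna (a-1) hA
      have haA : a ∉ C := by
        have e : a - 1 + 1 = a := by omega
        rwa [e] at hnaA
      obtain ⟨c, hcIs, hcd⟩ := ih (C.erase (a-1)) (a+1) j
        (by have := Finset.card_erase_of_mem hA
            have := Finset.card_pos.mpr hC
            omega)
        (fun i hi hcon => hna i (Finset.mem_of_mem_erase hi) (Finset.mem_of_mem_erase hcon))
        (fun i hi => ⟨(hmem i (Finset.mem_of_mem_erase hi)).1,
          by have := (hmem i (Finset.mem_of_mem_erase hi)).2; omega⟩)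
        (by omega) (fun h => absurd h (by omega)) hj
      have hrec : Nat.fib (a+1) = Nat.fib a + Nat.fib (a-1) := by
        have := fib_rec (x := a+1) (by omega)
        have e1 : a+1-1 = a := by omega
        have e2 : a+1-2 = a-1 := by omega
        rw [e1, e2] at this; omega
      have hsum : Nat.fib (a-1) + ∑ i ∈ C.erase (a-1), Nat.fib i = ∑ i ∈ C, Nat.fib i :=
        Finset.add_sum_erase _ _ hA
      have hv : Nat.fib (a+1) + (∑ i ∈ C.erase (a-1), Nat.fib i) + Nat.fib (2*k) + j
          = Nat.fib a + (∑ i ∈ C, Nat.fib i) + Nat.fib (2*k) + j := by omega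
      rw [hv] at hcIs
      refine ⟨c, hcIs, ?_⟩
      by_cases he : (C.erase (a-1)).Nonempty
      · rw [dif_pos he] at hcd
        have hminne : C.min' hC ≠ a - 1 := by
          obtain ⟨y, hy⟩ := he
          have hyC := Finset.mem_of_mem_erase hy
          have hyne := Finset.ne_of_mem_erase hy
          have h1 := C.min'_le y hyC
          have h2 := (hmem y hyC).2
          have h3 : y ≠ a := fun h => haA (h ▸ hyC)
          omega
        rw [min'_erase_eq hC hminne he] at hcd
        exact hcd
      · rw [dif_neg he] at hcd
        have hmin : C.min' hC = a - 1 := by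
          by_contra hcon
          exact he ⟨C.min' hC, Finset.mem_erase.mpr ⟨hcon, hmnC⟩⟩
        rw [hmin]
        omega
    · by_cases hB : a ∈ C
      · -- Case B : doubled top
        have hBmem : ∀ i ∈ C.erase a, 2*k+2 ≤ i ∧ i ≤ a - 2 := by
          intro i hi
          have hiC := Finset.mem_of_mem_erase hi
          have hine := Finset.ne_of_mem_erase hi
          have h2 := (hmem i hiC).2
          have h3 : i ≠ a - 1 := fun h => hA (h ▸ hiC)
          exact ⟨(hmem i hiC).1, by omega⟩
        have hW' : (∑ i ∈ C.erase a, Nat.fib i) + Nat.fib (2*k) + j < Nat.fib (a-1) := by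
          rcases (C.erase a).eq_empty_or_nonempty with he | he
          · rw [he]
            simp only [Finset.sum_empty, zero_add]
            have : Nat.fib (2*k+1) ≤ Nat.fib (a-1) := Nat.fib_mono (by omega)
            omega
          · obtain ⟨y, hy⟩ := he
            have hy2 := hBmem y hy
            have := wbound hk (C := C.erase a) (M := a-2)
              (fun i hi hcon => hna i (Finset.mem_of_mem_erase hi) (Finset.mem_of_mem_erase hcon))
              hBmem (by omega) hj
            have e : a - 2 + 1 = a - 1 := by omega
            rwa [e] at this
        have hsum : Nat.fib a + ∑ i ∈ C.erase a, Nat.fib i = ∑ i ∈ C, Nat.fib i :=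
          Finset.add_sum_erase _ _ hB
        have hminC : (C.erase a).Nonempty → C.min' hC ≠ a := by
          intro he
          obtain ⟨y, hy⟩ := he
          have hyC := Finset.mem_of_mem_erase hy
          have h1 := C.min'_le y hyC
          have h2 := (hBmem y hy).2
          omega
        have hminCa : ¬ (C.erase a).Nonempty → C.min' hC = a := by
          intro he
          by_contra hcon
          exact he ⟨C.min' hC, Finset.mem_erase.mpr ⟨hcon, hmnC⟩⟩
        rcases Nat.even_or_odd a with heva | hodda
        · -- B even : glue a 2 on top of E(C')
          obtain ⟨t, rfl⟩ : ∃ t, a = 2*t := ⟨a/2, by rcases heva with ⟨u,hu⟩; omega⟩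
          obtain ⟨c0, hc0, hcd0⟩ := hE (C.erase (2*t))
            (by have := Finset.card_erase_of_mem hB; omega)
            (fun i hi hcon => hna i (Finset.mem_of_mem_erase hi) (Finset.mem_of_mem_erase hcon))
            (fun i hi => (hBmem i hi).1)
          have hg := glue2 hc0 t (by omega) (by
            have e : 2*t-1 = 2*t-1 := rfl
            have : Nat.fib (2*t - 1) = Nat.fib (2*t-1) := rfl
            calc (∑ i ∈ C.erase (2*t), Nat.fib i) + Nat.fib (2*k) + j
                < Nat.fib (2*t-1) := hW'
              _ ≤ Nat.fib (2*t-1) := le_refl _)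
          refine ⟨c0 + Finsupp.single t 2, ?_, ?_⟩
          · have hv : (∑ i ∈ C.erase (2*t), Nat.fib i) + Nat.fib (2*k) + j + 2 * Nat.fib (2*t)
                = Nat.fib (2*t) + (∑ i ∈ C, Nat.fib i) + Nat.fib (2*k) + j := by omega
            rwa [hv] at hg
          · rw [Finsupp.add_apply, Finsupp.single_apply, if_neg (show ¬ (t = k) by omega), add_zero]
            by_cases he : (C.erase (2*t)).Nonempty
            · rw [dif_pos he, min'_erase_eq hC (hminC he) he] at hcd0
              exact hcd0
            · rw [dif_neg he] at hcd0
              rw [hminCa he]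
              omega
        · -- B odd : recurse on (a-2, C') and glue a 1 at the top
          have ha3 : 2*k+3 ≤ a := by
            rcases hodda with ⟨u, hu⟩
            have := (hmem a hB).1
            omega
          obtain ⟨t, rfl⟩ : ∃ t, a = 2*t+1 := ⟨(a-1)/2, by rcases hodda with ⟨u,hu⟩; omega⟩
          obtain ⟨c0, hc0, hcd0⟩ := ih (C.erase (2*t+1)) (2*t+1-2) j
            (by have := Finset.card_erase_of_mem hB
                have := Finset.card_pos.mpr hC
                omega)
            (fun i hi hcon => hna i (Finset.mem_of_mem_erase hi) (Finset.mem_of_mem_erase hcon))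
            (fun i hi => ⟨(hBmem i hi).1, by have := (hBmem i hi).2; omega⟩)
            (by omega)
            (by intro h
                apply Finset.eq_empty_iff_forall_notMem.mpr
                intro x hx
                have := hBmem x hx
                omega)
            hj
          have hrac : Nat.fib (2*t+1) = Nat.fib (2*t) + Nat.fib (2*t-1) := by
            have := fib_rec (x := 2*t+1) (by omega)
            have e1 : 2*t+1-1 = 2*t := by omega
            have e2 : 2*t+1-2 = 2*t-1 := by omega
            rw [e1, e2] at this; omega
          have hrac2 : Nat.fib (2*t) = Nat.fib (2*t-1) + Nat.fib (2*t-2) := by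
            have := fib_rec (x := 2*t) (by omega)
            have e1 : 2*t-1 = 2*t-1 := rfl
            have e2 : 2*t-2 = 2*t-2 := rfl
            omega
          have hrac3 : Nat.fib (2*t+2) = Nat.fib (2*t+1) + Nat.fib (2*t) := by
            have := fib_sum2 (2*t)
            omega
          have hg := glue1 hc0 (t+1) (by omega) (by
            have e : 2*t+1-2 = 2*t-1 := by omega
            rw [e] at hc0 ⊢
            have e2 : 2*(t+1) = 2*t+2 := by omega
            rw [e2]
            have h1 : (∑ i ∈ C.erase (2*t+1), Nat.fib i) + Nat.fib (2*k) + j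
                < Nat.fib (2*t) := by
              have := hW'
              have e3 : 2*t+1-1 = 2*t := by omega
              rw [e3] at this
              exact this
            omega)
          refine ⟨c0 + Finsupp.single (t+1) 1, ?_, ?_⟩
          · have e : 2*t+1-2 = 2*t-1 := by omega
            have e2 : 2*(t+1) = 2*t+2 := by omega
            rw [e, e2] at hg
            have hv : Nat.fib (2*t-1) + (∑ i ∈ C.erase (2*t+1), Nat.fib i) + Nat.fib (2*k) + j
                  + Nat.fib (2*t+2)
                = Nat.fib (2*t+1) + (∑ i ∈ C, Nat.fib i) + Nat.fib (2*k) + j := by omega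
            rwa [hv] at hg
          · rw [Finsupp.add_apply, Finsupp.single_apply, if_neg (show ¬ (t+1 = k) by omega), add_zero]
            by_cases he : (C.erase (2*t+1)).Nonempty
            · rw [dif_pos he, min'_erase_eq hC (hminC he) he] at hcd0
              exact hcd0
            · rw [dif_neg he] at hcd0
              rw [hminCa he]
              omega
      · -- Case C : top gap ≥ 2
        have hCle : ∀ i ∈ C, 2*k+2 ≤ i ∧ i ≤ a - 2 := by
          intro i hi
          have h2 := (hmem i hi).2
          have h3 : i ≠ a - 1 := fun h => hA (h ▸ hi)
          have h4 : i ≠ a := fun h => hB (h ▸ hi)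
          exact ⟨(hmem i hi).1, by omega⟩
        have hW : (∑ i ∈ C, Nat.fib i) + Nat.fib (2*k) + j < Nat.fib (a-1) := by
          obtain ⟨y, hy⟩ := hC
          have hy2 := hCle y hy
          have := wbound hk (C := C) (M := a-2) hna hCle (by omega) hj
          have e : a - 2 + 1 = a - 1 := by omega
          rwa [e] at this
        rcases Nat.even_or_odd a with heva | hodda
        · -- C even : glue a 1 on top of E(C)
          obtain ⟨t, rfl⟩ : ∃ t, a = 2*t := ⟨a/2, by rcases heva with ⟨u,hu⟩; omega⟩
          obtain ⟨c0, hc0, hcd0⟩ := hE C hcard hna (fun i hi => (hCle i hi).1)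
          have hg := glue1 hc0 t (by omega) (by
            have : Nat.fib (2*t-1) ≤ Nat.fib (2*t) := Nat.fib_mono (by omega)
            omega)
          refine ⟨c0 + Finsupp.single t 1, ?_, ?_⟩
          · have hv : (∑ i ∈ C, Nat.fib i) + Nat.fib (2*k) + j + Nat.fib (2*t)
                = Nat.fib (2*t) + (∑ i ∈ C, Nat.fib i) + Nat.fib (2*k) + j := by omega
            rwa [hv] at hg
          · rw [Finsupp.add_apply, Finsupp.single_apply, if_neg (show ¬ (t = k) by omega), add_zero]
            rw [dif_pos hC] at hcd0
            exact hcd0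
        · -- C odd : the cascade step
          have ha3 : 2*k+3 ≤ a := by
            rcases hodda with ⟨u, hu⟩
            omega
          obtain ⟨t, rfl⟩ : ∃ t, a = 2*t+1 := ⟨(a-1)/2, by rcases hodda with ⟨u,hu⟩; omega⟩
          have hMC : C.max' hC ∈ C := C.max'_mem hC
          have hM22 : 2*k+2 ≤ C.max' hC := (hCle _ hMC).1
          have hMa : C.max' hC ≤ 2*t-1 := by
            have := (hCle _ hMC).2
            omega
          have hC''mem : ∀ i ∈ C.erase (C.max' hC), 2*k+2 ≤ i ∧ i ≤ C.max' hC - 2 := by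
            intro i hi
            have hiC := Finset.mem_of_mem_erase hi
            have hine := Finset.ne_of_mem_erase hi
            have h1 := C.le_max' i hiC
            have h2 : i ≠ C.max' hC - 1 := by
              intro h
              have : i + 1 = C.max' hC := by omega
              exact hna i hiC (this ▸ hMC)
            exact ⟨(hCle i hiC).1, by omega⟩
          have hW'' : (∑ i ∈ C.erase (C.max' hC), Nat.fib i) + Nat.fib (2*k) + j
              < Nat.fib (C.max' hC - 1) := by
            rcases (C.erase (C.max' hC)).eq_empty_or_nonempty with he | he
            · rw [he]
              simp only [Finset.sum_empty, zero_add]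
              have : Nat.fib (2*k+1) ≤ Nat.fib (C.max' hC - 1) := Nat.fib_mono (by omega)
              omega
            · obtain ⟨y, hy⟩ := he
              have hy2 := hC''mem y hy
              have := wbound hk (C := C.erase (C.max' hC)) (M := C.max' hC - 2)
                (fun i hi hcon =>
                  hna i (Finset.mem_of_mem_erase hi) (Finset.mem_of_mem_erase hcon))
                hC''mem (by omega) hj
              have e : C.max' hC - 2 + 1 = C.max' hC - 1 := by omega
              rwa [e] at this
          have hsum : Nat.fib (C.max' hC) + ∑ i ∈ C.erase (C.max' hC), Nat.fib i
              = ∑ i ∈ C, Nat.fib i := Finset.add_sum_erase _ _ hMC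
          -- outcome bookkeeping
          have houtcome : ∀ c0 : ℕ →₀ ℕ,
              (c0 k + (if h : (C.erase (C.max' hC)).Nonempty
                then ((C.erase (C.max' hC)).min' h) % 2 else (C.max' hC) % 2) = 1) →
              c0 k + (C.min' hC) % 2 = 1 := by
            intro c0 h0
            by_cases he : (C.erase (C.max' hC)).Nonempty
            · rw [dif_pos he, min'_erase_eq hC (min_ne_max_of_erase_max_nonempty hC he) he] at h0
              exact h0
            · rw [dif_neg he] at h0
              rw [min_eq_of_erase_max_empty hC (Finset.not_nonempty_iff_eq_empty.mp he)]
              exact h0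
          rcases Nat.even_or_odd (C.max' hC) with hevM | hoddM
          · -- M even
            obtain ⟨r, hrM⟩ : ∃ r, C.max' hC = 2*r := ⟨C.max' hC / 2, by
              rcases hevM with ⟨u,hu⟩; omega⟩
            have hrk : k+1 ≤ r := by omega
            have hrt : r+1 ≤ t := by omega
            obtain ⟨c0, hc0, hcd0⟩ := hE (C.erase (C.max' hC))
              (by have := Finset.card_erase_of_mem hMC; omega)
              (fun i hi hcon => hna i (Finset.mem_of_mem_erase hi) (Finset.mem_of_mem_erase hcon))
              (fun i hi => (hC''mem i hi).1)
            have hg2 := glue2 hc0 (r+1) (by omega) (by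
              have h1 : Nat.fib (C.max' hC - 1) ≤ Nat.fib (2*(r+1)-1) :=
                Nat.fib_mono (by omega)
              omega)
            have hb : (∑ i ∈ C.erase (C.max' hC), Nat.fib i) + Nat.fib (2*k) + j
                + 2 * Nat.fib (2*(r+1)) < Nat.fib (2*(r+2)) := by
              have e1 : 2*(r+1) = 2*r+2 := by omega
              have e2 : 2*(r+2) = 2*r+4 := by omega
              rw [e1, e2]
              have hx1 : Nat.fib (2*r+4) = Nat.fib (2*r+2) + Nat.fib (2*r+3) := fib_sum2 _
              have hx2 : Nat.fib (2*r+3) = Nat.fib (2*r+1) + Nat.fib (2*r+2) := fib_sum2 _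
              have hx3 : Nat.fib (C.max' hC - 1) ≤ Nat.fib (2*r+1) := Nat.fib_mono (by omega)
              omega
            obtain ⟨c2, hc2, hc2low⟩ := chain t (r+2) _ _ hg2 (by omega) hb
            refine ⟨c2, ?_, ?_⟩
            · have htel := sum_even_tel t (r+2) (by omega) (by omega)
              have e5 : 2*(r+2)-1 = 2*r+3 := by omega
              rw [e5] at htel
              have hx1 : Nat.fib (2*r+3) = Nat.fib (2*r+1) + Nat.fib (2*r+2) := fib_sum2 _
              have hx2 : Nat.fib (2*r+2) = Nat.fib (2*r) + Nat.fib (2*r+1) := fib_sum2 _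
              have e1 : 2*(r+1) = 2*r+2 := by omega
              rw [e1] at hc2
              have hv : (∑ i ∈ C.erase (C.max' hC), Nat.fib i) + Nat.fib (2*k) + j
                    + 2 * Nat.fib (2*r+2) + (∑ s ∈ Finset.Icc (r+2) t, Nat.fib (2*s))
                  = Nat.fib (2*t+1) + (∑ i ∈ C, Nat.fib i) + Nat.fib (2*k) + j := by
                rw [← hsum, hrM]
                omega
              rwa [hv] at hc2
            · rw [hc2low k (by omega), Finsupp.add_apply, Finsupp.single_apply,
                if_neg (show ¬ (r+1 = k) by omega), add_zero]
              apply houtcome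
              rcases (C.erase (C.max' hC)).eq_empty_or_nonempty with he | he
              · rw [dif_neg (by rw [he]; simp)] at hcd0 ⊢
                rw [hrM]
                omega
              · rw [dif_pos he] at hcd0 ⊢
                exact hcd0
          · -- M odd : recurse on (M-2, C'')
            obtain ⟨r, hrM⟩ : ∃ r, C.max' hC = 2*r+1 := ⟨(C.max' hC - 1) / 2, by
              rcases hoddM with ⟨u,hu⟩; omega⟩
            have hrk : k+1 ≤ r := by omega
            have hrt : r+1 ≤ t := by omega
            obtain ⟨c0, hc0, hcd0⟩ := ih (C.erase (C.max' hC)) (C.max' hC - 2) j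
              (by have := Finset.card_erase_of_mem hMC
                  have := Finset.card_pos.mpr hC
                  omega)
              (fun i hi hcon => hna i (Finset.mem_of_mem_erase hi) (Finset.mem_of_mem_erase hcon))
              hC''mem
              (by omega)
              (by intro h
                  apply Finset.eq_empty_iff_forall_notMem.mpr
                  intro x hx
                  have := hC''mem x hx
                  omega)
              hj
            have hrecM : Nat.fib (C.max' hC) = Nat.fib (C.max' hC - 1) + Nat.fib (C.max' hC - 2) :=
              fib_rec (by omega)
            have hVb : Nat.fib (C.max' hC - 2) + (∑ i ∈ C.erase (C.max' hC), Nat.fib i)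
                + Nat.fib (2*k) + j < Nat.fib (2*(r+1)-1) := by
              have h1 : Nat.fib (C.max' hC - 2) ≤ Nat.fib (C.max' hC - 1) := Nat.fib_mono (by omega)
              have h2 : Nat.fib (C.max' hC) ≤ Nat.fib (2*(r+1)-1) := Nat.fib_mono (by omega)
              omega
            have hg2 := glue2 hc0 (r+1) (by omega) hVb
            have hb : Nat.fib (C.max' hC - 2) + (∑ i ∈ C.erase (C.max' hC), Nat.fib i)
                + Nat.fib (2*k) + j + 2 * Nat.fib (2*(r+1)) < Nat.fib (2*(r+2)) := by
              have e1 : 2*(r+1) = 2*r+2 := by omega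
              have e2 : 2*(r+2) = 2*r+4 := by omega
              have e3 : 2*(r+1)-1 = 2*r+1 := by omega
              rw [e1, e2]
              rw [e3] at hVb
              have hx1 : Nat.fib (2*r+4) = Nat.fib (2*r+2) + Nat.fib (2*r+3) := fib_sum2 _
              have hx2 : Nat.fib (2*r+3) = Nat.fib (2*r+1) + Nat.fib (2*r+2) := fib_sum2 _
              omega
            obtain ⟨c2, hc2, hc2low⟩ := chain t (r+2) _ _ hg2 (by omega) hb
            refine ⟨c2, ?_, ?_⟩
            · have htel := sum_even_tel t (r+2) (by omega) (by omega)
              have e5 : 2*(r+2)-1 = 2*r+3 := by omega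
              rw [e5] at htel
              have hx1 : Nat.fib (2*r+3) = Nat.fib (2*r+1) + Nat.fib (2*r+2) := fib_sum2 _
              have hx2 : Nat.fib (2*r+2) = Nat.fib (2*r) + Nat.fib (2*r+1) := fib_sum2 _
              have hx3 : Nat.fib (2*r+1) = Nat.fib (2*r-1) + Nat.fib (2*r) := by
                have := fib_rec (x := 2*r+1) (by omega)
                have e1 : 2*r+1-1 = 2*r := by omega
                have e2 : 2*r+1-2 = 2*r-1 := by omega
                rw [e1, e2] at this; omega
              have e1 : 2*(r+1) = 2*r+2 := by omega
              rw [e1] at hc2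
              have eM : C.max' hC - 2 = 2*r-1 := by omega
              rw [eM] at hc2
              have hv : Nat.fib (2*r-1) + (∑ i ∈ C.erase (C.max' hC), Nat.fib i)
                    + Nat.fib (2*k) + j + 2 * Nat.fib (2*r+2)
                    + (∑ s ∈ Finset.Icc (r+2) t, Nat.fib (2*s))
                  = Nat.fib (2*t+1) + (∑ i ∈ C, Nat.fib i) + Nat.fib (2*k) + j := by
                rw [← hsum, hrM]
                omega
              rwa [hv] at hc2
            · rw [hc2low k (by omega), Finsupp.add_apply, Finsupp.single_apply,
                if_neg (show ¬ (r+1 = k) by omega), add_zero]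
              apply houtcome
              rcases (C.erase (C.max' hC)).eq_empty_or_nonempty with he | he
              · rw [dif_neg (by rw [he]; simp)] at hcd0 ⊢
                omega
              · rw [dif_pos he] at hcd0 ⊢
                omega

noncomputable def phiR : ℝ := (1 + Real.sqrt 5) / 2
noncomputable def psiR : ℝ := (1 - Real.sqrt 5) / 2
noncomputable def rhoR : ℝ := (Real.sqrt 5 - 1) / 2

lemma s5 : Real.sqrt 5 ^ 2 = 5 := Real.sq_sqrt (by norm_num)

lemma sqrt5_bounds : 2 < Real.sqrt 5 ∧ Real.sqrt 5 < 3 := by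
  have h0 : 0 ≤ Real.sqrt 5 := Real.sqrt_nonneg 5
  have h1 := s5
  constructor <;> nlinarith

lemma rho_pos : 0 < rhoR := by
  have := sqrt5_bounds
  unfold rhoR
  linarith [this.1]

lemma rho_lt_one : rhoR < 1 := by
  have := sqrt5_bounds
  unfold rhoR
  linarith [this.2]

lemma psi_eq : psiR = -rhoR := by unfold psiR rhoR; ring

lemma psi_sq : psiR ^ 2 = psiR + 1 := by
  unfold psiR
  have := s5
  nlinarith

lemma rho_sq : rhoR ^ 2 = 1 - rhoR := by
  have := psi_sq
  rw [psi_eq] at this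
  nlinarith

lemma fib_phi : ∀ n : ℕ, (Nat.fib n : ℝ) * phiR = (Nat.fib (n+1) : ℝ) - psiR ^ n := by
  intro n
  induction n using Nat.strong_induction_on with
  | _ n ih =>
    match n with
    | 0 => simp
    | 1 =>
      simp only [Nat.fib_one, Nat.cast_one, one_mul, pow_one]
      unfold phiR psiR
      push_cast
      ring
    | (m+2) =>
      have h1 := ih m (by omega)
      have h2 := ih (m+1) (by omega)
      have hf : (Nat.fib (m+2) : ℝ) = Nat.fib m + Nat.fib (m+1) := by
        rw [Nat.fib_add_two]; push_cast; ring
      have hf3 : (Nat.fib (m+3) : ℝ) = Nat.fib (m+1) + Nat.fib (m+2) := by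
        rw [show m+3 = (m+1)+2 from rfl, Nat.fib_add_two]; push_cast; ring
      have hpsi : psiR ^ (m+2) = psiR ^ m + psiR ^ (m+1) := by
        have : psiR ^ (m+2) = psiR ^ m * psiR ^ 2 := by ring
        rw [this, psi_sq]; ring
      rw [hf, hpsi]
      have e : m+2+1 = m+3 := rfl
      rw [e, hf3]
      rw [show m+1+1 = m+2 from rfl] at h2
      linarith

lemma rho_sum : ∀ (N : ℕ) (A : Finset ℕ) (m : ℕ), A.card ≤ N → 2 ≤ m →
    (∀ i ∈ A, i + 1 ∉ A) → (∀ i ∈ A, m ≤ i) →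
    (∑ i ∈ A, rhoR ^ (i-1)) < rhoR ^ (m-2) := by
  intro N
  induction N with
  | zero =>
    intro A m hc _ _ _
    have : A = ∅ := Finset.card_eq_zero.mp (by omega)
    subst this
    simpa using pow_pos rho_pos (m-2)
  | succ N ih =>
    intro A m hc hm hna hmem
    rcases A.eq_empty_or_nonempty with rfl | hA
    · simpa using pow_pos rho_pos (m-2)
    · have hmin : A.min' hA ∈ A := A.min'_mem hA
      have hminm : m ≤ A.min' hA := hmem _ hmin
      have hrest : ∀ i ∈ A.erase (A.min' hA), A.min' hA + 2 ≤ i := by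
        intro i hi
        have hiA := Finset.mem_of_mem_erase hi
        have hine := Finset.ne_of_mem_erase hi
        have h1 := A.min'_le i hiA
        have h2 : i ≠ A.min' hA + 1 := by
          intro h
          exact hna _ hmin (h ▸ hiA)
        omega
      have hsum : (∑ i ∈ A, rhoR ^ (i-1))
          = rhoR ^ (A.min' hA - 1) + ∑ i ∈ A.erase (A.min' hA), rhoR ^ (i-1) :=
        (Finset.add_sum_erase _ _ hmin).symm
      have hih := ih (A.erase (A.min' hA)) (A.min' hA + 2)
        (by have := Finset.card_erase_of_mem hmin
            have := Finset.card_pos.mpr hA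
            omega)
        (by omega)
        (fun i hi hcon => hna i (Finset.mem_of_mem_erase hi) (Finset.mem_of_mem_erase hcon))
        hrest
      have e1 : A.min' hA + 2 - 2 = A.min' hA := by omega
      rw [e1] at hih
      have hkey : rhoR ^ (A.min' hA - 1) + rhoR ^ (A.min' hA) = rhoR ^ (A.min' hA - 2) := by
        have e2 : A.min' hA - 1 = A.min' hA - 2 + 1 := by omega
        have e3 : A.min' hA = A.min' hA - 2 + 2 := by omega
        rw [e2]
        nth_rewrite 2 [e3]
        rw [pow_succ, pow_add]
        have := rho_sq
        nlinarith [pow_pos rho_pos (A.min' hA - 2)]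
      have hle : rhoR ^ (A.min' hA - 2) ≤ rhoR ^ (m-2) := by
        apply pow_le_pow_of_le_one (le_of_lt rho_pos) (le_of_lt rho_lt_one)
        omega
      rw [hsum]
      linarith

/-- The key floor formula: for a nonadjacent set `A ⊆ [2,∞)` whose min is even,
`⌊(∑ F_{i-1}) φ⌋ = ∑ F_i`. -/
lemma floor_phi (A : Finset ℕ) (hna : ∀ i ∈ A, i + 1 ∉ A) (hmem : ∀ i ∈ A, 2 ≤ i)
    (hminev : ∀ h : A.Nonempty, (A.min' h) % 2 = 0) :
    ⌊((∑ i ∈ A, Nat.fib (i-1) : ℕ) : ℝ) * phiR⌋₊ = ∑ i ∈ A, Nat.fib i := by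
  rcases A.eq_empty_or_nonempty with rfl | hA
  · simp
  · have hphi : ((∑ i ∈ A, Nat.fib (i-1) : ℕ) : ℝ) * phiR
        = (∑ i ∈ A, (Nat.fib i : ℝ)) - ∑ i ∈ A, psiR ^ (i-1) := by
      push_cast
      rw [Finset.sum_mul, ← Finset.sum_sub_distrib]
      apply Finset.sum_congr rfl
      intro i hi
      have h2i := hmem i hi
      have := fib_phi (i-1)
      have e : i - 1 + 1 = i := by omega
      rw [e] at this
      exact this
    set e := ∑ i ∈ A, psiR ^ (i-1) with hedef
    -- bounds on e
    obtain ⟨p, hp⟩ : ∃ p, A.min' hA = 2*p := ⟨A.min' hA / 2, by have := hminev hA; omega⟩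
    have hp1 : 1 ≤ p := by
      have := hmem _ (A.min'_mem hA)
      omega
    have hsplit : e = psiR ^ (2*p - 1) + ∑ i ∈ A.erase (A.min' hA), psiR ^ (i-1) := by
      rw [hedef, ← Finset.add_sum_erase _ _ (A.min'_mem hA), hp]
    have hrest : ∀ i ∈ A.erase (A.min' hA), 2*p + 2 ≤ i := by
      intro i hi
      have hiA := Finset.mem_of_mem_erase hi
      have hine := Finset.ne_of_mem_erase hi
      have h1 := A.min'_le i hiA
      have h2 : i ≠ A.min' hA + 1 := by
        intro h
        exact hna _ (A.min'_mem hA) (h ▸ hiA)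
      omega
    have habs : |∑ i ∈ A.erase (A.min' hA), psiR ^ (i-1)| < rhoR ^ (2*p) := by
      calc |∑ i ∈ A.erase (A.min' hA), psiR ^ (i-1)|
          ≤ ∑ i ∈ A.erase (A.min' hA), |psiR ^ (i-1)| := Finset.abs_sum_le_sum_abs _ _
        _ = ∑ i ∈ A.erase (A.min' hA), rhoR ^ (i-1) := by
            apply Finset.sum_congr rfl
            intro i _
            rw [abs_pow, psi_eq, abs_neg, abs_of_pos rho_pos]
        _ < rhoR ^ (2*p + 2 - 2) := rho_sum _ _ _ (le_refl _) (by omega)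
            (fun i hi hcon => hna i (Finset.mem_of_mem_erase hi) (Finset.mem_of_mem_erase hcon))
            hrest
        _ = rhoR ^ (2*p) := by norm_num
    have hodd : psiR ^ (2*p-1) = -(rhoR ^ (2*p-1)) := by
      rw [psi_eq]
      exact Odd.neg_pow (by refine ⟨p-1, by omega⟩) rhoR
    -- e ∈ (-1, 0)
    have hr21 : rhoR ^ (2*p) = rhoR ^ (2*p-1) * rhoR := by
      rw [← pow_succ]
      congr 1
      omega
    have hr22 : rhoR ^ (2*p-1) = rhoR ^ (2*p-2) * rhoR := by
      rw [← pow_succ]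
      congr 1
      omega
    have hrpow1 : rhoR ^ (2*p-2) ≤ 1 := pow_le_one₀ (le_of_lt rho_pos) (le_of_lt rho_lt_one)
    have hpos1 : 0 < rhoR ^ (2*p-1) := pow_pos rho_pos _
    have hpos2 : 0 < rhoR ^ (2*p-2) := pow_pos rho_pos _
    have heneg : e < 0 := by
      rw [hsplit, hodd]
      have := abs_lt.mp habs
      have hρ := rho_lt_one
      nlinarith [this.2]
    have hegt : -1 < e := by
      rw [hsplit, hodd]
      have := abs_lt.mp habs
      have h2 : rhoR ^ (2*p-1) + rhoR ^ (2*p) = rhoR ^ (2*p-2) := by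
        rw [hr21, hr22]
        have := rho_sq
        nlinarith
      nlinarith [this.1]
    rw [hphi]
    rw [Nat.floor_eq_iff (by
      have hcast : (0:ℝ) ≤ ∑ i ∈ A, (Nat.fib i : ℝ) :=
        Finset.sum_nonneg (fun i _ => by positivity)
      linarith)]
    constructor
    · push_cast
      linarith
    · push_cast
      linarith

lemma fib_split {k i : ℕ} (hi : 2*k+1 ≤ i) :
    Nat.fib i = Nat.fib (i-(2*k+1)) * Nat.fib (2*k) + Nat.fib (i-2*k) * Nat.fib (2*k+1) := by
  have h := Nat.fib_add (i-(2*k+1)) (2*k)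
  have e1 : i-(2*k+1) + 2*k + 1 = i := by omega
  have e2 : i-(2*k+1) + 1 = i - 2*k := by omega
  rw [e1, e2] at h
  exact h

lemma sum_odd_fib_eq (l : ℕ) :
    ∑ i ∈ (Finset.Icc 1 l).image (fun s => 2*s), Nat.fib (i-1) = Nat.fib (2*l) := by
  rw [Finset.sum_image (by intro x _ y _ h; simp only at h; omega)]
  exact sum_odd_tel l

/-- Existence of the "min-even" representation `t = ∑_{i ∈ A} F_{i-1}`. -/
lemma rep_exists : ∀ t : ℕ, ∃ A : Finset ℕ,
    (∀ i ∈ A, i + 1 ∉ A) ∧ (∀ i ∈ A, 2 ≤ i) ∧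
    (∀ h : A.Nonempty, (A.min' h) % 2 = 0) ∧
    (∀ i ∈ A, Nat.fib (i-1) ≤ t) ∧ t = ∑ i ∈ A, Nat.fib (i-1) := by
  intro t
  induction t using Nat.strong_induction_on with
  | _ t ih =>
    rcases Nat.eq_zero_or_pos t with rfl | ht
    · exact ⟨∅, by simp, by simp, by intro h; exact absurd h (by simp), by simp, by simp⟩
    · obtain ⟨q, hq2, hqle, hqlt⟩ := zeck_window t ht
      have hfibq : 1 ≤ Nat.fib q := Nat.fib_pos.mpr (by omega)
      have hrec : Nat.fib (q+1) = Nat.fib q + Nat.fib (q-1) := by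
        have := fib_rec (x := q+1) (by omega)
        have e1 : q+1-1 = q := by omega
        have e2 : q+1-2 = q-1 := by omega
        rw [e1, e2] at this; omega
      rcases Nat.eq_zero_or_pos (t - Nat.fib q) with hz | hpos
      · -- t = fib q exactly
        rcases Nat.even_or_odd q with hev | hodd
        · -- q even: use {2, 4, ..., q}
          obtain ⟨l, rfl⟩ : ∃ l, q = 2*l := ⟨q/2, by rcases hev with ⟨u,hu⟩; omega⟩
          have hl1 : 1 ≤ l := by omega
          refine ⟨(Finset.Icc 1 l).image (fun s => 2*s), ?_, ?_, ?_, ?_, ?_⟩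
          · intro i hi hcon
            simp only [Finset.mem_image, Finset.mem_Icc] at hi hcon
            omega
          · intro i hi
            simp only [Finset.mem_image, Finset.mem_Icc] at hi
            omega
          · intro h
            have := Finset.min'_mem _ h
            simp only [Finset.mem_image, Finset.mem_Icc] at this
            omega
          · intro i hi
            simp only [Finset.mem_image, Finset.mem_Icc] at hi
            obtain ⟨s, hs, rfl⟩ := hi
            calc Nat.fib (2*s-1) ≤ Nat.fib (2*l) := Nat.fib_mono (by omega)
              _ ≤ t := hqle
          · rw [sum_odd_fib_eq l]
            omega
        · -- q odd: singleton {q+1}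
          refine ⟨{q+1}, by simp, by simp; omega, ?_, ?_, ?_⟩
          · intro h
            simp only [Finset.min'_singleton]
            rcases hodd with ⟨u, hu⟩
            omega
          · intro i hi
            simp only [Finset.mem_singleton] at hi
            subst hi
            simpa using hqle
          · simp
            omega
      · -- recursive case
        have ht' : t - Nat.fib q < t := by omega
        obtain ⟨A', hna', hge', hmin', hinv', hsum'⟩ := ih (t - Nat.fib q) ht'
        have hA'ne : A'.Nonempty := by
          by_contra hcon
          rw [Finset.not_nonempty_iff_eq_empty] at hcon
          rw [hcon] at hsum'
          simp at hsum'
          omega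
        have hbound : ∀ i ∈ A', i ≤ q - 1 := by
          intro i hi
          have h1 := hinv' i hi
          have h2 : t - Nat.fib q < Nat.fib (q-1) := by omega
          have h3 : Nat.fib (i-1) < Nat.fib (q-1) := by omega
          by_contra hcon
          exact absurd (Nat.fib_mono (show q-1 ≤ i-1 by omega)) (by omega)
        have hnotmem : q+1 ∉ A' := by
          intro h
          have := hbound _ h
          omega
        refine ⟨insert (q+1) A', ?_, ?_, ?_, ?_, ?_⟩
        · intro i hi hcon
          rcases Finset.mem_insert.mp hi with rfl | hiA
          · rcases Finset.mem_insert.mp hcon with h | h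
            · omega
            · have := hbound _ h; omega
          · rcases Finset.mem_insert.mp hcon with h | h
            · have := hbound _ hiA; omega
            · exact hna' i hiA h
        · intro i hi
          rcases Finset.mem_insert.mp hi with rfl | hiA
          · omega
          · exact hge' i hiA
        · intro h
          have hmineq : (insert (q+1) A').min' h = A'.min' hA'ne := by
            rw [Finset.min'_insert _ _ hA'ne]
            apply min_eq_right
            have := hbound _ (A'.min'_mem hA'ne)
            omega
          rw [hmineq]
          exact hmin' hA'ne
        · intro i hi
          rcases Finset.mem_insert.mp hi with rfl | hiA
          · have e : q+1-1 = q := by omega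
            rw [e]; exact hqle
          · have := hinv' i hiA; omega
        · rw [Finset.sum_insert hnotmem]
          have e : q+1-1 = q := by omega
          rw [e]
          omega

/-- Zeckendorf existence with an index upper bound. -/
lemma zeck_exists_below : ∀ (j : ℕ) (m : ℕ), j < Nat.fib (m+1) →
    ∃ s : Finset ℕ, (∀ i ∈ s, 2 ≤ i ∧ i ≤ m) ∧ (∀ i ∈ s, i + 1 ∉ s) ∧
      j = ∑ i ∈ s, Nat.fib i := by
  intro j
  induction j using Nat.strong_induction_on with
  | _ j ih =>
    intro m hjm
    rcases Nat.eq_zero_or_pos j with rfl | hj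
    · exact ⟨∅, by simp, by simp, by simp⟩
    · obtain ⟨q, hq2, hqle, hqlt⟩ := zeck_window j hj
      have hfibq : 1 ≤ Nat.fib q := Nat.fib_pos.mpr (by omega)
      have hrec : Nat.fib (q+1) = Nat.fib q + Nat.fib (q-1) := by
        have := fib_rec (x := q+1) (by omega)
        have e1 : q+1-1 = q := by omega
        have e2 : q+1-2 = q-1 := by omega
        rw [e1, e2] at this; omega
      have hqm : q ≤ m := by
        by_contra hcon
        exact absurd (Nat.fib_mono (show m+1 ≤ q by omega)) (by omega)
      obtain ⟨s', hmem', hna', hsum'⟩ := ih (j - Nat.fib q) (by omega) (q-2) (by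
        have e : q-2+1 = q-1 := by omega
        rw [e]
        omega)
      have hnotmem : q ∉ s' := by
        intro h
        have := (hmem' _ h).2
        omega
      refine ⟨insert q s', ?_, ?_, ?_⟩
      · intro i hi
        rcases Finset.mem_insert.mp hi with rfl | hiA
        · omega
        · have := hmem' i hiA; omega
      · intro i hi hcon
        rcases Finset.mem_insert.mp hi with rfl | hiA
        · rcases Finset.mem_insert.mp hcon with h | h
          · omega
          · have := (hmem' _ h).2; omega
        · rcases Finset.mem_insert.mp hcon with h | h
          · have := (hmem' _ hiA).2; omega
          · exact hna' i hiA h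
      · rw [Finset.sum_insert hnotmem]
        omega


lemma propD_pack {k : ℕ} (hk : 1 ≤ k) (B : Finset ℕ) (j : ℕ)
    (hna : ∀ i ∈ B, i + 1 ∉ B) (hmem : ∀ i ∈ B, 2*k+2 ≤ i)
    (hj : j < Nat.fib (2*k-1)) :
    ∃ c, IsCG ((∑ i ∈ B, Nat.fib i) + Nat.fib (2*k) + j) c ∧
      c k + (if h : B.Nonempty then (B.min' h) % 2 else 0) = 1 := by
  rcases B.eq_empty_or_nonempty with rfl | hB
  · obtain ⟨c, hc, hck⟩ := accept_base hk hj
    refine ⟨c, by simpa using hc, ?_⟩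
    rw [dif_neg (by simp)]
    omega
  · have hMB : B.max' hB ∈ B := B.max'_mem hB
    have hM22 : 2*k+2 ≤ B.max' hB := hmem _ hMB
    obtain ⟨c, hcIs, hcd⟩ := propD hk (B.erase (B.max' hB)).card
      (B.erase (B.max' hB)) (B.max' hB) j (le_refl _)
      (fun i hi hcon => hna i (Finset.mem_of_mem_erase hi) (Finset.mem_of_mem_erase hcon))
      (fun i hi => ⟨hmem i (Finset.mem_of_mem_erase hi),
        B.le_max' i (Finset.mem_of_mem_erase hi)⟩)
      (by omega) (fun h => absurd h (by omega)) hj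
    rw [Finset.add_sum_erase _ _ hMB] at hcIs
    refine ⟨c, hcIs, ?_⟩
    rw [dif_pos hB]
    by_cases he : (B.erase (B.max' hB)).Nonempty
    · rw [dif_pos he, min'_erase_eq hB (min_ne_max_of_erase_max_nonempty hB he) he] at hcd
      exact hcd
    · rw [dif_neg he] at hcd
      rw [min_eq_of_erase_max_empty hB (Finset.not_nonempty_iff_eq_empty.mp he)]
      exact hcd

theorem main_theorem' (k : ℕ) (hk : 1 ≤ k) :
    {n : ℕ | (∃ s : Finset ℕ, IsZeck n s ∧ 2 * k ∈ s) ∧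
        (∃ c : ℕ →₀ ℕ, IsCG n c ∧ 1 ≤ c k)} =
      {x : ℕ | ∃ m : ℕ, 1 ≤ m ∧ ∃ j : ℕ, j ≤ Nat.fib (2 * k - 1) - 1 ∧
        x = m * Nat.fib (2 * k) +
          ⌊((m : ℝ) - 1) * ((1 + Real.sqrt 5) / 2)⌋₊ * Nat.fib (2 * k + 1) + j} := by
  have hfibpos : 1 ≤ Nat.fib (2*k-1) := Nat.fib_pos.mpr (by omega)
  ext n
  simp only [Set.mem_setOf_eq]
  constructor
  · rintro ⟨⟨s, ⟨hs2, hsna, hsum⟩, hks⟩, c, hcIs, hck⟩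
    have h2k1 : 2*k+1 ∉ s := hsna _ hks
    have hBna : ∀ i ∈ s.filter (fun i => 2*k < i), i + 1 ∉ s.filter (fun i => 2*k < i) := by
      intro i hi hcon
      exact hsna i (Finset.mem_filter.mp hi).1 (Finset.mem_filter.mp hcon).1
    have hBmem : ∀ i ∈ s.filter (fun i => 2*k < i), 2*k+2 ≤ i := by
      intro i hi
      rw [Finset.mem_filter] at hi
      have : i ≠ 2*k+1 := fun h => h2k1 (h ▸ hi.1)
      omega
    have hlowmem : ∀ i ∈ s.filter (fun i => i < 2*k), 2 ≤ i ∧ i ≤ 2*k-2 := by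
      intro i hi
      rw [Finset.mem_filter] at hi
      have h1 := hs2 i hi.1
      have h2 : i ≠ 2*k-1 := by
        intro h
        have h3 : i + 1 = 2*k := by omega
        exact hsna i hi.1 (h3 ▸ hks)
      exact ⟨h1, by omega⟩
    have hjlt : (∑ i ∈ s.filter (fun i => i < 2*k), Nat.fib i) < Nat.fib (2*k-1) := by
      have hz := zbound (s.filter (fun i => i < 2*k)).card (s.filter (fun i => i < 2*k))
        1 (2*k-2) (le_refl _)
        (fun i hi hcon => hsna i (Finset.mem_filter.mp hi).1 (Finset.mem_filter.mp hcon).1)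
        (fun i hi => by have := hlowmem i hi; omega) (by omega)
      have e : 2*k-2+1 = 2*k-1 := by omega
      rw [e, Nat.fib_one] at hz
      omega
    have hnsum : n = (∑ i ∈ s.filter (fun i => 2*k < i), Nat.fib i) + Nat.fib (2*k)
        + (∑ i ∈ s.filter (fun i => i < 2*k), Nat.fib i) := by
      have h1 := Finset.sum_filter_add_sum_filter_not s (fun i => 2*k < i) Nat.fib
      have hRins : s.filter (fun i => ¬ 2*k < i) = insert (2*k) (s.filter (fun i => i < 2*k)) := by
        ext i
        simp only [Finset.mem_filter, Finset.mem_insert]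
        constructor
        · rintro ⟨hi, hle⟩
          rcases eq_or_ne i (2*k) with rfl | hne
          · exact Or.inl rfl
          · exact Or.inr ⟨hi, by omega⟩
        · rintro (rfl | ⟨hi, hlt⟩)
          · exact ⟨hks, by omega⟩
          · exact ⟨hi, by omega⟩
      have h2knot : 2*k ∉ s.filter (fun i => i < 2*k) := by
        intro h
        rw [Finset.mem_filter] at h
        omega
      rw [hRins, Finset.sum_insert h2knot] at h1
      omega
    obtain ⟨c₁, hc₁, hd₁⟩ := propD_pack hk (s.filter (fun i => 2*k < i))
      (∑ i ∈ s.filter (fun i => i < 2*k), Nat.fib i) hBna hBmem hjlt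
    rw [← hnsum] at hc₁
    have hcc : c = c₁ := cg_unique n c c₁ hcIs hc₁
    rw [← hcc] at hd₁
    have hparity : ∀ h : (s.filter (fun i => 2*k < i)).Nonempty,
        ((s.filter (fun i => 2*k < i)).min' h) % 2 = 0 := by
      intro h
      rw [dif_pos h] at hd₁
      omega
    -- shift down by 2k
    have hinj : ∀ x ∈ s.filter (fun i => 2*k < i), ∀ y ∈ s.filter (fun i => 2*k < i),
        x - 2*k = y - 2*k → x = y := by
      intro x hx y hy hxy
      have := hBmem x hx
      have := hBmem y hy
      omega
    have hAna : ∀ i ∈ (s.filter (fun i => 2*k < i)).image (fun i => i - 2*k),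
        i + 1 ∉ (s.filter (fun i => 2*k < i)).image (fun i => i - 2*k) := by
      intro i hi hcon
      rw [Finset.mem_image] at hi hcon
      obtain ⟨x, hx, rfl⟩ := hi
      obtain ⟨y, hy, hyx⟩ := hcon
      have hx2 := hBmem x hx
      have hy2 := hBmem y hy
      have h5 : y = x + 1 := by omega
      exact hBna x hx (h5 ▸ hy)
    have hAmem : ∀ i ∈ (s.filter (fun i => 2*k < i)).image (fun i => i - 2*k), 2 ≤ i := by
      intro i hi
      rw [Finset.mem_image] at hi
      obtain ⟨x, hx, rfl⟩ := hi
      have := hBmem x hx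
      omega
    have hAmin : ∀ h : ((s.filter (fun i => 2*k < i)).image (fun i => i - 2*k)).Nonempty,
        (((s.filter (fun i => 2*k < i)).image (fun i => i - 2*k)).min' h) % 2 = 0 := by
      intro h
      have hmono : Monotone (fun i => i - 2*k) := fun x y hxy => Nat.sub_le_sub_right hxy _
      rw [Finset.min'_image hmono]
      have hBne := h.of_image
      have h1 := hBmem _ ((s.filter (fun i => 2*k < i)).min'_mem hBne)
      have h2 := hparity hBne
      omega
    have hfl := floor_phi ((s.filter (fun i => 2*k < i)).image (fun i => i - 2*k))
      hAna hAmem hAmin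
    rw [show phiR = (1 + Real.sqrt 5)/2 from rfl] at hfl
    have hTA : (∑ i ∈ (s.filter (fun i => 2*k < i)).image (fun i => i - 2*k), Nat.fib (i-1))
        = ∑ i ∈ s.filter (fun i => 2*k < i), Nat.fib (i - (2*k+1)) := by
      rw [Finset.sum_image hinj]
      apply Finset.sum_congr rfl
      intro x hx
      congr 1
    have hXA : (∑ i ∈ (s.filter (fun i => 2*k < i)).image (fun i => i - 2*k), Nat.fib i)
        = ∑ i ∈ s.filter (fun i => 2*k < i), Nat.fib (i - 2*k) := Finset.sum_image hinj
    have hsplitB : (∑ i ∈ s.filter (fun i => 2*k < i), Nat.fib i)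
        = (∑ i ∈ s.filter (fun i => 2*k < i), Nat.fib (i-(2*k+1))) * Nat.fib (2*k)
          + (∑ i ∈ s.filter (fun i => 2*k < i), Nat.fib (i-2*k)) * Nat.fib (2*k+1) := by
      rw [Finset.sum_mul, Finset.sum_mul, ← Finset.sum_add_distrib]
      apply Finset.sum_congr rfl
      intro i hi
      exact fib_split (by have := hBmem i hi; omega)
    refine ⟨(∑ i ∈ (s.filter (fun i => 2*k < i)).image (fun i => i - 2*k), Nat.fib (i-1)) + 1,
      by omega, ∑ i ∈ s.filter (fun i => i < 2*k), Nat.fib i, by omega, ?_⟩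
    have hcast : (((∑ i ∈ (s.filter (fun i => 2*k < i)).image (fun i => i - 2*k),
          Nat.fib (i-1)) + 1 : ℕ) : ℝ) - 1
        = ((∑ i ∈ (s.filter (fun i => 2*k < i)).image (fun i => i - 2*k),
          Nat.fib (i-1) : ℕ) : ℝ) := by
      push_cast
      ring
    rw [hcast, hfl, hTA, hXA, add_mul, one_mul]
    omega
  · rintro ⟨m, hm1, j, hjle, rfl⟩
    obtain ⟨t, rfl⟩ : ∃ t, m = t + 1 := ⟨m-1, by omega⟩
    have hjlt : j < Nat.fib (2*k-1) := by omega
    obtain ⟨A, hAna, hAge, hAmin, hAinv, hAsum⟩ := rep_exists t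
    have hcast : ((t+1 : ℕ) : ℝ) - 1 = ((t : ℕ) : ℝ) := by push_cast; ring
    have hfl := floor_phi A hAna hAge hAmin
    rw [show phiR = (1 + Real.sqrt 5)/2 from rfl] at hfl
    have hinj : ∀ x ∈ A, ∀ y ∈ A, x + 2*k = y + 2*k → x = y := by
      intro x _ y _ h
      have h' : x + 2*k = y + 2*k := h
      omega
    have hB'mem : ∀ i ∈ A.image (fun i => i + 2*k), 2*k+2 ≤ i := by
      intro i hi
      rw [Finset.mem_image] at hi
      obtain ⟨x, hx, rfl⟩ := hi
      have := hAge x hx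
      omega
    have hB'na : ∀ i ∈ A.image (fun i => i + 2*k), i + 1 ∉ A.image (fun i => i + 2*k) := by
      intro i hi hcon
      rw [Finset.mem_image] at hi hcon
      obtain ⟨x, hx, rfl⟩ := hi
      obtain ⟨y, hy, hyx⟩ := hcon
      have h5 : y = x + 1 := by omega
      exact hAna x hx (h5 ▸ hy)
    have hBsum : (∑ i ∈ A.image (fun i => i + 2*k), Nat.fib i)
        = t * Nat.fib (2*k) + (∑ i ∈ A, Nat.fib i) * Nat.fib (2*k+1) := by
      rw [Finset.sum_image hinj]
      have hcong : ∀ x ∈ A, Nat.fib (x + 2*k)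
          = Nat.fib (x-1) * Nat.fib (2*k) + Nat.fib x * Nat.fib (2*k+1) := by
        intro x hx
        have h2 := hAge x hx
        have h3 := fib_split (k := k) (i := x + 2*k) (by omega)
        have e1 : x + 2*k - (2*k+1) = x - 1 := by omega
        have e2 : x + 2*k - 2*k = x := by omega
        rw [e1, e2] at h3
        exact h3
      rw [Finset.sum_congr rfl hcong, Finset.sum_add_distrib,
        ← Finset.sum_mul, ← Finset.sum_mul, ← hAsum]
    have hVAL : (t+1) * Nat.fib (2*k)
          + (∑ i ∈ A, Nat.fib i) * Nat.fib (2*k+1) + j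
        = (∑ i ∈ A.image (fun i => i + 2*k), Nat.fib i) + Nat.fib (2*k) + j := by
      rw [hBsum, add_mul, one_mul]
      ring
    rw [hcast, hAsum, hfl]
    rw [← hAsum, hVAL]
    constructor
    · -- Zeckendorf witness
      obtain ⟨sj, hsjmem, hsjna, hsjsum⟩ := zeck_exists_below j (2*k-2) (by
        have e : 2*k-2+1 = 2*k-1 := by omega
        rw [e]
        exact hjlt)
      have hsjub : ∀ i ∈ sj, 2 ≤ i ∧ i ≤ 2*k-2 := hsjmem
      have hdisj : Disjoint (A.image (fun i => i + 2*k)) sj := by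
        rw [Finset.disjoint_left]
        intro i hi hcon
        have := hB'mem i hi
        have := hsjub i hcon
        omega
      have h2knotin : 2*k ∉ (A.image (fun i => i + 2*k)) ∪ sj := by
        intro h
        rcases Finset.mem_union.mp h with h | h
        · have := hB'mem _ h; omega
        · have := hsjub _ h; omega
      refine ⟨insert (2*k) ((A.image (fun i => i + 2*k)) ∪ sj), ⟨?_, ?_, ?_⟩, ?_⟩
      · intro i hi
        rcases Finset.mem_insert.mp hi with rfl | hi
        · omega
        · rcases Finset.mem_union.mp hi with h | h
          · have := hB'mem _ h; omega
          · exact (hsjub _ h).1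
      · intro i hi hcon
        rcases Finset.mem_insert.mp hcon with hc1 | hc1
        · -- i + 1 = 2k
          rcases Finset.mem_insert.mp hi with rfl | hi2
          · omega
          · rcases Finset.mem_union.mp hi2 with h | h
            · have := hB'mem _ h; omega
            · have := hsjub _ h
              omega
        · rcases Finset.mem_union.mp hc1 with hc2 | hc2
          · rcases Finset.mem_insert.mp hi with rfl | hi2
            · have := hB'mem _ hc2; omega
            · rcases Finset.mem_union.mp hi2 with h | h
              · exact hB'na _ h hc2
              · have := hsjub _ h
                have := hB'mem _ hc2
                omega
          · rcases Finset.mem_insert.mp hi with rfl | hi2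
            · have := hsjub _ hc2; omega
            · rcases Finset.mem_union.mp hi2 with h | h
              · have := hsjub _ hc2
                have := hB'mem _ h
                omega
              · exact hsjna _ h hc2
      · rw [Finset.sum_insert h2knotin, Finset.sum_union hdisj]
        omega
      · exact Finset.mem_insert_self _ _
    · -- CG witness
      obtain ⟨c, hcIs, hcd⟩ := propD_pack hk (A.image (fun i => i + 2*k)) j hB'na hB'mem hjlt
      refine ⟨c, hcIs, ?_⟩
      have hz : (if h : (A.image (fun i => i + 2*k)).Nonempty
          then ((A.image (fun i => i + 2*k)).min' h) % 2 else 0) = 0 := by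
        by_cases h : (A.image (fun i => i + 2*k)).Nonempty
        · rw [dif_pos h]
          have hmono : Monotone (fun i => i + 2*k) := fun x y hxy => Nat.add_le_add_right hxy _
          rw [Finset.min'_image hmono]
          have hAne := h.of_image
          have := hAmin hAne
          omega
        · rw [dif_neg h]
      omega


theorem main_theorem (k : ℕ) (hk : 1 ≤ k) :
    {n : ℕ | (∃ s : Finset ℕ, IsZeck n s ∧ 2 * k ∈ s) ∧
        (∃ c : ℕ →₀ ℕ, IsCG n c ∧ 1 ≤ c k)} =
      {x : ℕ | ∃ m : ℕ, 1 ≤ m ∧ ∃ j : ℕ, j ≤ Nat.fib (2 * k - 1) - 1 ∧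
        x = m * Nat.fib (2 * k) +
          ⌊((m : ℝ) - 1) * ((1 + Real.sqrt 5) / 2)⌋₊ * Nat.fib (2 * k + 1) + j} := main_theorem' k hk
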